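/- arXiv:2012.12917 — 9 statements merged into one kernel-verified Lean document; each statement's English description precedes it below -/
import Mathlib

section
/- For every function F in the vector-valued RKHS G induced by K = k·Id_H there exists a unique Hilbert–Schmidt operator A on H such that F(x) = A φ(x) for all x ∈ E, and ‖A‖_{HS} = ‖F‖_G; conversely every Hilbert–Schmidt operator A on H gives rise to an element A φ(·) of G. -/
set_option linter.unusedSectionVars false
set_option maxHeartbeats 1000000

open scoped RealInnerProductSpace ENNReal

noncomputable section OperatorRKHSAux

variable {E H G : Type*}
    [NormedAddCommGroup H] [InnerProductSpace ℝ H] [CompleteSpace H]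
    [NormedAddCommGroup G] [InnerProductSpace ℝ G] [CompleteSpace G]
    (φ : E → H) (Kx : E → H →L[ℝ] G)

private lemma orp_norm_eq_of_mul_self {a b : ℝ} (ha : 0 ≤ a) (hb : 0 ≤ b)
    (h : a * a = b * b) : a = b := by
  have := congrArg Real.sqrt h
  rwa [Real.sqrt_mul_self ha, Real.sqrt_mul_self hb] at this

/-- linear combination map sending finsupps to elements of `H`. -/
def orpL : (E →₀ ℝ) →ₗ[ℝ] H := Finsupp.linearCombination ℝ φ

/-- linear combination map sending finsupps to operators `H →L G`. -/
def orpM : (E →₀ ℝ) →ₗ[ℝ] (H →L[ℝ] G) := Finsupp.linearCombination ℝ Kx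

variable (hK : ∀ (x x' : E) (h h' : H),
    ⟪Kx x h, Kx x' h'⟫ = ⟪φ x, φ x'⟫ * ⟪h, h'⟫)

include hK in
lemma orp_key (c c' : E →₀ ℝ) (h h' : H) :
    ⟪orpM Kx c h, orpM Kx c' h'⟫ = ⟪orpL φ c, orpL φ c'⟫ * ⟪h, h'⟫ := by
  classical
  simp only [orpL, orpM, Finsupp.linearCombination_apply, Finsupp.sum,
    ContinuousLinearMap.coe_sum', Finset.sum_apply, ContinuousLinearMap.coe_smul',
    Pi.smul_apply, sum_inner, inner_sum, real_inner_smul_left, real_inner_smul_right,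
    hK, Finset.sum_mul, Finset.mul_sum]
  refine Finset.sum_congr rfl fun i _ => Finset.sum_congr rfl fun j _ => by ring

include hK in
lemma orp_ker : LinearMap.ker (orpL φ) ≤ LinearMap.ker (orpM Kx) := by
  intro c hc
  rw [LinearMap.mem_ker] at hc ⊢
  ext h
  rw [ContinuousLinearMap.zero_apply, ← @inner_self_eq_zero ℝ,
    orp_key φ Kx hK, hc, inner_zero_left, zero_mul]

/-- the operator-valued map on the span of the features. -/
def orpS : LinearMap.range (orpL φ) →ₗ[ℝ] (H →L[ℝ] G) :=
  (Submodule.liftQ _ (orpM Kx) (orp_ker φ Kx hK)).comp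
    ((orpL φ).quotKerEquivRange.symm.toLinearMap)

lemma orpS_eq (c : E →₀ ℝ) (hc : orpL φ c ∈ LinearMap.range (orpL φ)) :
    orpS φ Kx hK ⟨orpL φ c, hc⟩ = orpM Kx c := by
  simp [orpS, LinearMap.quotKerEquivRange_symm_apply_image, Submodule.mkQ_apply,
    Submodule.liftQ_apply]

include hK in
lemma orpS_inner (u u' : LinearMap.range (orpL φ)) (h h' : H) :
    ⟪orpS φ Kx hK u h, orpS φ Kx hK u' h'⟫ = ⟪(u : H), (u' : H)⟫ * ⟪h, h'⟫ := by
  obtain ⟨c, hc⟩ := u.2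
  obtain ⟨c', hc'⟩ := u'.2
  have hu : (⟨orpL φ c, LinearMap.mem_range_self _ c⟩ : LinearMap.range (orpL φ)) = u :=
    Subtype.ext hc
  have hu' : (⟨orpL φ c', LinearMap.mem_range_self _ c'⟩ : LinearMap.range (orpL φ)) = u' :=
    Subtype.ext hc'
  rw [← hu, ← hu', orpS_eq, orpS_eq, orp_key φ Kx hK]

include hK in
lemma orpS_norm (u : LinearMap.range (orpL φ)) (h : H) :
    ‖orpS φ Kx hK u h‖ = ‖u‖ * ‖h‖ := by
  have h1 := orpS_inner φ Kx hK u u h h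
  rw [real_inner_self_eq_norm_mul_norm, real_inner_self_eq_norm_mul_norm,
    real_inner_self_eq_norm_mul_norm] at h1
  refine orp_norm_eq_of_mul_self (norm_nonneg _)
    (mul_nonneg (norm_nonneg _) (norm_nonneg _)) ?_
  rw [h1, Submodule.coe_norm]
  ring

/-- the operator-valued map on the span of the features, as a continuous map. -/
def orpS₁ : LinearMap.range (orpL φ) →L[ℝ] (H →L[ℝ] G) :=
  LinearMap.mkContinuous (orpS φ Kx hK) 1 (fun u => by
    rw [one_mul]
    refine ContinuousLinearMap.opNorm_le_bound _ (norm_nonneg u) fun h => ?_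
    rw [orpS_norm φ Kx hK])

variable (hφdense : Dense (Submodule.span ℝ (Set.range φ) : Set H))

include hφdense in
lemma orp_denseRange : DenseRange ((LinearMap.range (orpL φ)).subtypeL) := by
  have hs : (LinearMap.range (orpL φ) : Set H) = (Submodule.span ℝ (Set.range φ) : Set H) := by
    rw [orpL, Finsupp.range_linearCombination]
  have hd : Dense (LinearMap.range (orpL φ) : Set H) := hs ▸ hφdense
  exact hd.denseRange_val

/-- the extension of the feature-to-operator map to all of `H`. -/
def orpSbar (_hφdense : Dense (Submodule.span ℝ (Set.range φ) : Set H)) : H →L[ℝ] (H →L[ℝ] G) :=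
  (orpS₁ φ Kx hK).extend ((LinearMap.range (orpL φ)).subtypeL)

lemma orpSbar_phi (x : E) : orpSbar φ Kx hK hφdense (φ x) = Kx x := by
  have hmem : φ x ∈ LinearMap.range (orpL φ) :=
    ⟨Finsupp.single x 1, by simp [orpL]⟩
  have h1 : φ x = ((LinearMap.range (orpL φ)).subtypeL) ⟨φ x, hmem⟩ := rfl
  rw [orpSbar, h1, ContinuousLinearMap.extend_eq _ (orp_denseRange φ hφdense)
    ((show Isometry ((LinearMap.range (orpL φ)).subtypeL)
      from fun _ _ => rfl).isUniformInducing), orpS₁, LinearMap.mkContinuous_apply]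
  have h2 : (⟨φ x, hmem⟩ : LinearMap.range (orpL φ))
      = ⟨orpL φ (Finsupp.single x 1), LinearMap.mem_range_self _ _⟩ :=
    Subtype.ext (by simp [orpL])
  rw [h2, orpS_eq]
  simp [orpM]

include hK hφdense in
lemma orpSbar_inner_kx (v : H) (h h' : H) (x' : E) :
    ⟪Kx x' h', orpSbar φ Kx hK hφdense v h⟫ = ⟪φ x', v⟫ * ⟪h', h⟫ := by
  have hfg : ((innerSL ℝ (Kx x' h')).comp
        ((ContinuousLinearMap.apply ℝ G h).comp (orpSbar φ Kx hK hφdense)))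
      = (⟪h', h⟫ • (innerSL ℝ (φ x')) : H →L[ℝ] ℝ) := by
    apply ContinuousLinearMap.ext_on hφdense
    rintro _ ⟨x, rfl⟩
    simp only [ContinuousLinearMap.comp_apply, ContinuousLinearMap.apply_apply,
      ContinuousLinearMap.smul_apply, innerSL_apply_apply, smul_eq_mul]
    rw [orpSbar_phi φ Kx hK hφdense, hK]
    ring
  have h3 := ContinuousLinearMap.ext_iff.mp hfg v
  simp only [ContinuousLinearMap.comp_apply, ContinuousLinearMap.apply_apply,
    ContinuousLinearMap.smul_apply, innerSL_apply_apply, smul_eq_mul] at h3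
  rw [h3]
  ring

include hK hφdense in
lemma orpSbar_inner (v v' h h' : H) :
    ⟪orpSbar φ Kx hK hφdense v h, orpSbar φ Kx hK hφdense v' h'⟫
      = ⟪v, v'⟫ * ⟪h, h'⟫ := by
  have hfg : ((innerSL ℝ (orpSbar φ Kx hK hφdense v h)).comp
        ((ContinuousLinearMap.apply ℝ G h').comp (orpSbar φ Kx hK hφdense)))
      = (⟪h, h'⟫ • (innerSL ℝ v) : H →L[ℝ] ℝ) := by
    apply ContinuousLinearMap.ext_on hφdense
    rintro _ ⟨x, rfl⟩
    simp only [ContinuousLinearMap.comp_apply, ContinuousLinearMap.apply_apply,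
      ContinuousLinearMap.smul_apply, innerSL_apply_apply, smul_eq_mul]
    rw [orpSbar_phi φ Kx hK hφdense]
    have h4 := orpSbar_inner_kx φ Kx hK hφdense v h h' x
    have h5 := real_inner_comm (Kx x h') (orpSbar φ Kx hK hφdense v h)
    have h6 := real_inner_comm (φ x) v
    have h7 := real_inner_comm h' h
    linear_combination h4 + h5 - ⟪h', h⟫ * h6 - ⟪v, φ x⟫ * h7
  have h3 := ContinuousLinearMap.ext_iff.mp hfg v'
  simp only [ContinuousLinearMap.comp_apply, ContinuousLinearMap.apply_apply,
    ContinuousLinearMap.smul_apply, innerSL_apply_apply, smul_eq_mul] at h3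
  rw [h3]
  ring

include hK hφdense in
lemma orpSbar_norm (v h : H) :
    ‖orpSbar φ Kx hK hφdense v h‖ = ‖v‖ * ‖h‖ := by
  have h1 := orpSbar_inner φ Kx hK hφdense v v h h
  rw [real_inner_self_eq_norm_mul_norm, real_inner_self_eq_norm_mul_norm,
    real_inner_self_eq_norm_mul_norm] at h1
  exact orp_norm_eq_of_mul_self (norm_nonneg _)
    (mul_nonneg (norm_nonneg _) (norm_nonneg _)) (by rw [h1]; ring)

/-- the Hilbert–Schmidt operator associated to `F`. -/
def orpA (F : G) : H →L[ℝ] H :=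
  LinearMap.mkContinuous
    { toFun := fun v => ContinuousLinearMap.adjoint (orpSbar φ Kx hK hφdense v) F
      map_add' := fun v w => by
        simp only [map_add, ContinuousLinearMap.add_apply]
      map_smul' := fun c v => by
        simp only [map_smul, RingHom.id_apply, map_smulₛₗ, starRingEnd_apply, star_trivial,
          ContinuousLinearMap.smul_apply] }
    ‖F‖ (fun v => by
      calc ‖ContinuousLinearMap.adjoint (orpSbar φ Kx hK hφdense v) F‖
          ≤ ‖ContinuousLinearMap.adjoint (orpSbar φ Kx hK hφdense v)‖ * ‖F‖ :=
            ContinuousLinearMap.le_opNorm _ _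
        _ = ‖orpSbar φ Kx hK hφdense v‖ * ‖F‖ := by
            rw [LinearIsometryEquiv.norm_map]
        _ ≤ ‖v‖ * ‖F‖ := by
            refine mul_le_mul_of_nonneg_right ?_ (norm_nonneg F)
            refine ContinuousLinearMap.opNorm_le_bound _ (norm_nonneg v) fun h => ?_
            rw [orpSbar_norm φ Kx hK hφdense]
        _ = ‖F‖ * ‖v‖ := by ring)

lemma orpA_apply (F : G) (v : H) :
    orpA φ Kx hK hφdense F v
      = ContinuousLinearMap.adjoint (orpSbar φ Kx hK hφdense v) F := rfl

lemma orpA_inner (F : G) (v w : H) :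
    ⟪orpA φ Kx hK hφdense F v, w⟫ = ⟪F, orpSbar φ Kx hK hφdense v w⟫ := by
  rw [orpA_apply, ContinuousLinearMap.adjoint_inner_left]

lemma orpA_phi (F : G) (x : E) :
    orpA φ Kx hK hφdense F (φ x) = ContinuousLinearMap.adjoint (Kx x) F := by
  rw [orpA_apply, orpSbar_phi]

variable {ι : Type*} (b : HilbertBasis ι ℝ H)

/-- the induced orthonormal family in `G`. -/
def orpE : ι × ι → G := fun p => orpSbar φ Kx hK hφdense (b p.1) (b p.2)

include hK hφdense in
lemma orpE_orthonormal : Orthonormal ℝ (orpE φ Kx hK hφdense b) := by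
  classical
  rw [orthonormal_iff_ite]
  intro p q
  have hb := b.orthonormal
  rw [orthonormal_iff_ite] at hb
  rw [orpE, orpE]
  rw [orpSbar_inner φ Kx hK hφdense, hb, hb]
  by_cases h1 : p.1 = q.1 <;> by_cases h2 : p.2 = q.2 <;>
    simp [Prod.ext_iff, h1, h2]

variable (hGdense : Dense (Submodule.span ℝ {g : G | ∃ x h, g = Kx x h} : Set G))

include hGdense in
lemma orpE_total :
    ⊤ ≤ (Submodule.span ℝ (Set.range (orpE φ Kx hK hφdense b))).topologicalClosure := by
  set V := (Submodule.span ℝ (Set.range (orpE φ Kx hK hφdense b))).topologicalClosure with hV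
  have hVclosed : IsClosed (V : Set G) := Submodule.isClosed_topologicalClosure _
  have hstep1 : ∀ (j : ι) (u : H), orpSbar φ Kx hK hφdense u (b j) ∈ V := by
    intro j u
    set T : H →L[ℝ] G :=
      (ContinuousLinearMap.apply ℝ G (b j)).comp (orpSbar φ Kx hK hφdense) with hT
    set W : Submodule ℝ H := V.comap (T : H →ₗ[ℝ] G) with hW
    have hWclosed : IsClosed (W : Set H) := hVclosed.preimage T.continuous
    have hrange : Set.range ⇑b ⊆ W := by
      rintro _ ⟨i, rfl⟩
      show T (b i) ∈ V
      have : T (b i) = orpE φ Kx hK hφdense b (i, j) := rfl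
      rw [this]
      exact Submodule.le_topologicalClosure _ (Submodule.subset_span ⟨(i, j), rfl⟩)
    have hle : Submodule.span ℝ (Set.range ⇑b) ≤ W := Submodule.span_le.mpr hrange
    have htop : (⊤ : Submodule ℝ H) ≤ W := by
      rw [← b.dense_span]
      exact Submodule.topologicalClosure_minimal _ hle hWclosed
    exact htop (Submodule.mem_top : u ∈ ⊤)
  have hstep2 : ∀ (u h : H), orpSbar φ Kx hK hφdense u h ∈ V := by
    intro u h
    set W : Submodule ℝ H := V.comap ((orpSbar φ Kx hK hφdense u : H →L[ℝ] G) : H →ₗ[ℝ] G)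
      with hW
    have hWclosed : IsClosed (W : Set H) :=
      hVclosed.preimage (orpSbar φ Kx hK hφdense u).continuous
    have hrange : Set.range ⇑b ⊆ W := by
      rintro _ ⟨j, rfl⟩
      exact hstep1 j u
    have hle : Submodule.span ℝ (Set.range ⇑b) ≤ W := Submodule.span_le.mpr hrange
    have htop : (⊤ : Submodule ℝ H) ≤ W := by
      rw [← b.dense_span]
      exact Submodule.topologicalClosure_minimal _ hle hWclosed
    exact htop (Submodule.mem_top : h ∈ ⊤)
  have hspan : Submodule.span ℝ {g : G | ∃ x h, g = Kx x h} ≤ V := by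
    refine Submodule.span_le.mpr ?_
    rintro g ⟨x, h, rfl⟩
    rw [← orpSbar_phi φ Kx hK hφdense x]
    exact hstep2 (φ x) h
  have h1 : (Submodule.span ℝ {g : G | ∃ x h, g = Kx x h}).topologicalClosure ≤ V :=
    Submodule.topologicalClosure_minimal _ hspan hVclosed
  have h2 : (Submodule.span ℝ {g : G | ∃ x h, g = Kx x h}).topologicalClosure = ⊤ :=
    Submodule.dense_iff_topologicalClosure_eq_top.mp hGdense
  rw [← h2]
  exact h1

/-- the induced Hilbert basis of `G`. -/
def orpGB : HilbertBasis (ι × ι) ℝ G :=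
  HilbertBasis.mk (orpE_orthonormal φ Kx hK hφdense b)
    (orpE_total φ Kx hK hφdense b hGdense)

lemma orpGB_apply (p : ι × ι) :
    orpGB φ Kx hK hφdense b hGdense p = orpSbar φ Kx hK hφdense (b p.1) (b p.2) := by
  rw [orpGB]
  exact congrFun (HilbertBasis.coe_mk _ _) p

end OperatorRKHSAux

/-- Operator reproducing property. -/
theorem operator_reproducing_property
    {E H G ι : Type*}
    [NormedAddCommGroup H] [InnerProductSpace ℝ H] [CompleteSpace H]
    [NormedAddCommGroup G] [InnerProductSpace ℝ G] [CompleteSpace G]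
    (φ : E → H)
    (hφdense : Dense (Submodule.span ℝ (Set.range φ) : Set H))
    (b : HilbertBasis ι ℝ H)
    (Kx : E → H →L[ℝ] G)
    (hK : ∀ (x x' : E) (h h' : H),
      ⟪Kx x h, Kx x' h'⟫ = ⟪φ x, φ x'⟫ * ⟪h, h'⟫)
    (hGdense : Dense (Submodule.span ℝ {g : G | ∃ x h, g = Kx x h} : Set G)) :
    (∀ F : G, ∃! A : H →L[ℝ] H,
      (∀ x : E, ContinuousLinearMap.adjoint (Kx x) F = A (φ x)) ∧
      HasSum (fun i => ‖A (b i)‖ ^ 2) (‖F‖ ^ 2)) ∧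
    (∀ A : H →L[ℝ] H, Summable (fun i => ‖A (b i)‖ ^ 2) →
      ∃ F : G, ∀ x : E, ContinuousLinearMap.adjoint (Kx x) F = A (φ x)) := by
  classical
  constructor
  · -- existence and uniqueness
    intro F
    refine ⟨orpA φ Kx hK hφdense F, ⟨fun x => (orpA_phi φ Kx hK hφdense F x).symm, ?_⟩, ?_⟩
    · -- the Hilbert-Schmidt norm identity
      have hP := (orpGB φ Kx hK hφdense b hGdense).hasSum_inner_mul_inner F F
      have hfib : ∀ i : ι,
          HasSum (fun j => ⟪F, orpGB φ Kx hK hφdense b hGdense (i, j)⟫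
            * ⟪orpGB φ Kx hK hφdense b hGdense (i, j), F⟫)
          (‖orpA φ Kx hK hφdense F (b i)‖ ^ 2) := by
        intro i
        have h1 := b.hasSum_inner_mul_inner (orpA φ Kx hK hφdense F (b i))
          (orpA φ Kx hK hφdense F (b i))
        have h2 : ∀ j : ι, ⟪orpA φ Kx hK hφdense F (b i), b j⟫
            = ⟪F, orpGB φ Kx hK hφdense b hGdense (i, j)⟫ := by
          intro j
          rw [orpA_inner, orpGB_apply]
        have h3 : (fun j : ι => ⟪orpA φ Kx hK hφdense F (b i), b j⟫
            * ⟪b j, orpA φ Kx hK hφdense F (b i)⟫)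
            = fun j : ι => ⟪F, orpGB φ Kx hK hφdense b hGdense (i, j)⟫
              * ⟪orpGB φ Kx hK hφdense b hGdense (i, j), F⟫ := by
          funext j
          have c1 := real_inner_comm (orpA φ Kx hK hφdense F (b i)) (b j)
          have c2 := real_inner_comm F (orpGB φ Kx hK hφdense b hGdense (i, j))
          have c3 := h2 j
          linear_combination ⟪orpA φ Kx hK hφdense F (b i), b j⟫ * c1
            + (⟪orpA φ Kx hK hφdense F (b i), b j⟫
              + ⟪F, orpGB φ Kx hK hφdense b hGdense (i, j)⟫) * c3
            - ⟪F, orpGB φ Kx hK hφdense b hGdense (i, j)⟫ * c2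
        rw [h3, real_inner_self_eq_norm_sq] at h1
        exact h1
      have hsum := hP.prod_fiberwise hfib
      rwa [real_inner_self_eq_norm_sq] at hsum
    · -- uniqueness
      intro A' hA'
      refine ContinuousLinearMap.ext_on hφdense ?_
      rintro _ ⟨x, rfl⟩
      rw [← hA'.1 x, orpA_phi φ Kx hK hφdense]
  · -- converse
    intro A hsum
    have hrow : ∀ i : ι, HasSum (fun j : ι => ‖⟪A (b i), b j⟫‖ ^ 2) (‖A (b i)‖ ^ 2) := by
      intro i
      have h1 := b.hasSum_inner_mul_inner (A (b i)) (A (b i))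
      have h3 : (fun j : ι => ⟪A (b i), b j⟫ * ⟪b j, A (b i)⟫)
          = fun j : ι => ‖⟪A (b i), b j⟫‖ ^ 2 := by
        funext j
        rw [Real.norm_eq_abs, sq_abs]
        have c1 := real_inner_comm (A (b i)) (b j)
        linear_combination ⟪A (b i), b j⟫ * c1
      rw [h3, real_inner_self_eq_norm_sq] at h1
      exact h1
    have hc2 : Summable fun p : ι × ι => ‖⟪A (b p.1), b p.2⟫‖ ^ 2 := by
      refine (summable_prod_of_nonneg ?_).mpr ⟨fun i => (hrow i).summable, ?_⟩
      · intro p; positivity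
      · have h4 : (fun i : ι => ∑' j : ι, ‖⟪A (b i), b j⟫‖ ^ 2)
            = fun i : ι => ‖A (b i)‖ ^ 2 := by
          funext i; exact (hrow i).tsum_eq
        rw [h4]; exact hsum
    have hmem : Memℓp (fun p : ι × ι => ⟪A (b p.1), b p.2⟫) 2 := by
      refine memℓp_gen ?_
      have h2 : ∀ p : ι × ι, ‖⟪A (b p.1), b p.2⟫‖ ^ (2 : ℝ≥0∞).toReal
          = ‖⟪A (b p.1), b p.2⟫‖ ^ (2 : ℕ) := by
        intro p
        rw [show ((2 : ℝ≥0∞)).toReal = ((2 : ℕ) : ℝ) by norm_num, Real.rpow_natCast]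
      simp only [h2]
      exact hc2
    set gb := orpGB φ Kx hK hφdense b hGdense with hgb
    refine ⟨gb.repr.symm (⟨fun p : ι × ι => ⟪A (b p.1), b p.2⟫, hmem⟩ : lp (fun _ : ι × ι => ℝ) 2), fun x => ?_⟩
    set F : G := gb.repr.symm (⟨fun p : ι × ι => ⟪A (b p.1), b p.2⟫, hmem⟩ : lp (fun _ : ι × ι => ℝ) 2) with hF
    have hrepr : ∀ p : ι × ι, ⟪gb p, F⟫ = ⟪A (b p.1), b p.2⟫ := by
      intro p
      rw [← gb.repr_apply_apply, hF, LinearIsometryEquiv.apply_symm_apply]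
    refine ext_inner_right ℝ fun w => ?_
    rw [ContinuousLinearMap.adjoint_inner_left]
    have hs1 := gb.hasSum_inner_mul_inner F (Kx x w)
    have hfun : (fun p : ι × ι => ⟪F, gb p⟫ * ⟪gb p, Kx x w⟫)
        = fun p : ι × ι => ⟪b p.1, φ x⟫ * (⟪A (b p.1), b p.2⟫ * ⟪b p.2, w⟫) := by
      funext p
      rw [← real_inner_comm F (gb p), hrepr p, hgb, orpGB_apply,
        ← orpSbar_phi φ Kx hK hφdense x, orpSbar_inner φ Kx hK hφdense]
      ring
    rw [hfun] at hs1
    have hfib : ∀ i : ι,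
        HasSum (fun j : ι => ⟪b i, φ x⟫ * (⟪A (b i), b j⟫ * ⟪b j, w⟫))
          (⟪b i, φ x⟫ * ⟪A (b i), w⟫) := by
      intro i
      exact (b.hasSum_inner_mul_inner (A (b i)) w).mul_left _
    have hs2 := hs1.prod_fiberwise hfib
    have hs3 : HasSum (fun i : ι => ⟪b i, φ x⟫ * ⟪A (b i), w⟫) ⟪A (φ x), w⟫ := by
      have h4 := (b.hasSum_repr (φ x)).mapL ((innerSL ℝ w).comp A)
      have h5 : (fun i : ι => ((innerSL ℝ w).comp A) (b.repr (φ x) i • b i))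
          = fun i : ι => ⟪b i, φ x⟫ * ⟪A (b i), w⟫ := by
        funext i
        rw [map_smul, b.repr_apply_apply]
        simp only [ContinuousLinearMap.comp_apply, innerSL_apply_apply, smul_eq_mul]
        rw [← real_inner_comm w (A (b i))]
      rw [h5] at h4
      simp only [ContinuousLinearMap.comp_apply, innerSL_apply_apply] at h4
      rw [← real_inner_comm w (A (φ x))] at h4
      exact h4
    exact hs2.unique hs3
end

section
/- (Surrogate risk bound) For every Hilbert–Schmidt operator A : H → H, ‖A − P‖²_{H → L²(μ)} ≤ E[‖F*(X) − A*φ(X)‖²_H], where F*(x) = E[φ(Y) | X = x] is the conditional mean embedding, and this bound is sharp. -/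
open MeasureTheory ProbabilityTheory
open scoped RealInnerProductSpace
open scoped ENNReal

lemma aux_sq_lintegral_le {α : Type*} [MeasurableSpace α] (m : Measure α)
    [IsProbabilityMeasure m] {f : α → ℝ≥0∞} (hf : Measurable f) :
    (∫⁻ a, f a ∂m) ^ 2 ≤ ∫⁻ a, f a ^ 2 ∂m := by
  have hpq : Real.HolderConjugate 2 2 := Real.HolderConjugate.two_two
  have h := ENNReal.lintegral_mul_le_Lp_mul_Lq m hpq hf.aemeasurable
      (aemeasurable_const : AEMeasurable (fun _ => (1:ℝ≥0∞)) m)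
  simp only [Pi.mul_apply, mul_one, ENNReal.one_rpow, lintegral_one, measure_univ,
    ENNReal.one_rpow] at h
  calc (∫⁻ a, f a ∂m) ^ 2 ≤ ((∫⁻ a, f a ^ (2:ℝ) ∂m) ^ (1/2:ℝ)) ^ 2 := pow_le_pow_left' h 2
    _ = ∫⁻ a, f a ^ 2 ∂m := by
        rw [← ENNReal.rpow_natCast _ 2, ← ENNReal.rpow_mul]
        norm_num

lemma aux_memℒp_F {E H : Type*} [MeasurableSpace E] [NormedAddCommGroup H]
    [NormedSpace ℝ H]
    (μ ν : Measure E) [IsProbabilityMeasure μ] [IsProbabilityMeasure ν]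
    (p : Kernel E E) [IsMarkovKernel p] (hmarg : μ.bind (fun x => p x) = ν)
    (φ : E → H) (hφmeas : StronglyMeasurable φ) (hφν : MemLp φ 2 ν) :
    MemLp (fun x => ∫ y, φ y ∂(p x)) 2 μ := by
  have hFmeas : StronglyMeasurable (fun x => ∫ y, φ y ∂(p x)) :=
    StronglyMeasurable.integral_kernel_prod_right (κ := p) (f := fun _ y => φ y)
      (hφmeas.comp_measurable measurable_snd)
  refine ⟨hFmeas.aestronglyMeasurable, ?_⟩
  have hφe : Measurable fun y => (‖φ y‖₊ : ℝ≥0∞) := hφmeas.enorm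
  have hν2 : ∫⁻ y, (‖φ y‖₊ : ℝ≥0∞) ^ 2 ∂ν < ⊤ := by
    have h := hφν.2
    rw [eLpNorm_eq_lintegral_rpow_enorm_toReal two_ne_zero ENNReal.ofNat_ne_top] at h
    have htr : (2 : ℝ≥0∞).toReal = 2 := by norm_num
    rw [htr] at h
    have := (ENNReal.rpow_lt_top_iff_of_pos (by norm_num : (0:ℝ) < 1/2)).mp h
    calc ∫⁻ y, (‖φ y‖₊ : ℝ≥0∞) ^ 2 ∂ν = ∫⁻ y, (‖φ y‖₊ : ℝ≥0∞) ^ (2:ℝ) ∂ν := by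
          refine lintegral_congr fun y => ?_
          rw [← ENNReal.rpow_natCast _ 2]; norm_num
      _ < ⊤ := this
  have hbind : ∫⁻ x, ∫⁻ y, (‖φ y‖₊ : ℝ≥0∞) ^ 2 ∂(p x) ∂μ < ⊤ := by
    rw [← Measure.lintegral_bind p.measurable.aemeasurable (hφe.pow_const 2).aemeasurable, hmarg]
    exact hν2
  have hpt : ∀ x, (‖∫ y, φ y ∂(p x)‖₊ : ℝ≥0∞) ^ 2 ≤ ∫⁻ y, (‖φ y‖₊ : ℝ≥0∞) ^ 2 ∂(p x) :=
    fun x =>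
      le_trans (pow_le_pow_left' (enorm_integral_le_lintegral_enorm _) 2)
        (aux_sq_lintegral_le (p x) hφe)
  rw [eLpNorm_eq_lintegral_rpow_enorm_toReal two_ne_zero ENNReal.ofNat_ne_top]
  have htr : (2 : ℝ≥0∞).toReal = 2 := by norm_num
  rw [htr]
  refine ENNReal.rpow_lt_top_of_nonneg (by norm_num) ?_
  refine ne_of_lt (lt_of_le_of_lt ?_ hbind)
  refine lintegral_mono fun x => ?_
  calc (‖∫ y, φ y ∂(p x)‖₊ : ℝ≥0∞) ^ (2:ℝ)
      = (‖∫ y, φ y ∂(p x)‖₊ : ℝ≥0∞) ^ 2 := by rw [← ENNReal.rpow_natCast _ 2]; norm_num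
    _ ≤ _ := hpt x


/-- Surrogate risk bound: for every Hilbert–Schmidt operator `A : H → H`,
`‖A − P‖²_{H → L²(μ)} ≤ E[‖F*(X) − A*φ(X)‖²_H]`, where `F*(x) = E[φ(Y) | X = x]`
is the conditional mean embedding, and the bound is sharp (equality holds whenever
`A*φ(X) − F*(X)` is `μ`-a.s. equal to a constant element of `H`).  The operator
`A − P : H → L²(μ)` is encoded by `Q`. -/
theorem surrogate_risk_bound
    {E H ι : Type*} [MeasurableSpace E]
    [NormedAddCommGroup H] [InnerProductSpace ℝ H] [CompleteSpace H]
    (μ ν : Measure E) [IsProbabilityMeasure μ] [IsProbabilityMeasure ν]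
    (p : Kernel E E) [IsMarkovKernel p]
    (hmarg : μ.bind (fun x => p x) = ν)
    (φ : E → H) (hφmeas : StronglyMeasurable φ)
    (hφμ : MemLp φ 2 μ) (hφν : MemLp φ 2 ν)
    (hφint : ∀ x, Integrable φ (p x))
    (b : HilbertBasis ι ℝ H)
    (A : H →L[ℝ] H) (hA : Summable fun i => ‖A (b i)‖ ^ 2)
    (Q : H →L[ℝ] Lp ℝ 2 μ)
    (hQ : ∀ f : H, (Q f : E → ℝ) =ᵐ[μ]
      fun x => ⟪A f, φ x⟫ - ∫ y, ⟪f, φ y⟫ ∂(p x)) :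
    ‖Q‖ ^ 2 ≤
      ∫ x, ‖(∫ y, φ y ∂(p x)) - ContinuousLinearMap.adjoint A (φ x)‖ ^ 2 ∂μ ∧
    (∀ h : H,
      (∀ᵐ x ∂μ, ContinuousLinearMap.adjoint A (φ x) - (∫ y, φ y ∂(p x)) = h) →
      ‖Q‖ ^ 2 =
        ∫ x, ‖(∫ y, φ y ∂(p x)) - ContinuousLinearMap.adjoint A (φ x)‖ ^ 2 ∂μ) := by
  classical
  set F : E → H := fun x => ∫ y, φ y ∂(p x) with hFdef
  set g : E → H := fun x => ContinuousLinearMap.adjoint A (φ x) - F x with hgdef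
  have hkeyf : ∀ f : H, (Q f : E → ℝ) =ᵐ[μ] fun x => ⟪f, g x⟫ := by
    intro f
    filter_upwards [hQ f] with x hx
    rw [hx, hgdef]
    simp only [hFdef]
    rw [inner_sub_right, ContinuousLinearMap.adjoint_inner_right,
      integral_inner (hφint x) f]
  have hkey : ∀ f : H, ‖Q f‖ ^ 2 = ∫ x, ⟪f, g x⟫ ^ 2 ∂μ := by
    intro f
    rw [← real_inner_self_eq_norm_sq, L2.inner_def]
    refine integral_congr_ae ?_
    filter_upwards [hkeyf f] with x hx
    simp [RCLike.inner_apply, hx, sq]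
  have hFmem : MemLp F 2 μ := aux_memℒp_F μ ν p hmarg φ hφmeas hφν
  have hAmem : MemLp (fun x => ContinuousLinearMap.adjoint A (φ x)) 2 μ :=
    (ContinuousLinearMap.adjoint A).comp_memLp' hφμ
  have hgmem : MemLp g 2 μ := hAmem.sub hFmem
  have hgint : Integrable (fun x => ‖g x‖ ^ 2) μ := hgmem.norm.integrable_sq
  set C : ℝ := ∫ x, ‖g x‖ ^ 2 ∂μ with hCdef
  have hC0 : 0 ≤ C := integral_nonneg fun x => sq_nonneg _
  have hRHS : (∫ x, ‖F x - ContinuousLinearMap.adjoint A (φ x)‖ ^ 2 ∂μ) = C := by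
    refine integral_congr_ae (Filter.Eventually.of_forall fun x => ?_)
    show ‖F x - ContinuousLinearMap.adjoint A (φ x)‖ ^ 2
        = ‖ContinuousLinearMap.adjoint A (φ x) - F x‖ ^ 2
    rw [norm_sub_rev]
  have hboundf : ∀ f : H, ‖Q f‖ ^ 2 ≤ ‖f‖ ^ 2 * C := by
    intro f
    rw [hkey f]
    have hpt : ∀ x, ⟪f, g x⟫ ^ 2 ≤ ‖f‖ ^ 2 * ‖g x‖ ^ 2 := fun x => by
      have h1 := abs_real_inner_le_norm f (g x)
      nlinarith [sq_abs ⟪f, g x⟫, abs_nonneg ⟪f, g x⟫, norm_nonneg f, norm_nonneg (g x)]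
    calc ∫ x, ⟪f, g x⟫ ^ 2 ∂μ ≤ ∫ x, ‖f‖ ^ 2 * ‖g x‖ ^ 2 ∂μ :=
        integral_mono_of_nonneg (Filter.Eventually.of_forall fun x => sq_nonneg _)
          (hgint.const_mul _) (Filter.Eventually.of_forall hpt)
      _ = ‖f‖ ^ 2 * C := integral_const_mul _ _
  have hQle : ‖Q‖ ≤ Real.sqrt C := by
    refine Q.opNorm_le_bound (Real.sqrt_nonneg _) fun f => ?_
    have h2 : ‖Q f‖ ^ 2 ≤ (Real.sqrt C * ‖f‖) ^ 2 := by
      rw [mul_pow, Real.sq_sqrt hC0]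
      calc ‖Q f‖ ^ 2 ≤ ‖f‖ ^ 2 * C := hboundf f
        _ = C * ‖f‖ ^ 2 := mul_comm _ _
    calc ‖Q f‖ = Real.sqrt (‖Q f‖ ^ 2) := (Real.sqrt_sq (norm_nonneg _)).symm
      _ ≤ Real.sqrt ((Real.sqrt C * ‖f‖) ^ 2) := Real.sqrt_le_sqrt h2
      _ = Real.sqrt C * ‖f‖ := Real.sqrt_sq (by positivity)
  constructor
  · rw [hRHS]
    calc ‖Q‖ ^ 2 ≤ (Real.sqrt C) ^ 2 := pow_le_pow_left₀ (norm_nonneg _) hQle 2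
      _ = C := Real.sq_sqrt hC0
  · intro h hh
    have hgh : ∀ᵐ x ∂μ, g x = h := by
      filter_upwards [hh] with x hx
      rw [hgdef]; exact hx
    have hRHSh : (∫ x, ‖F x - ContinuousLinearMap.adjoint A (φ x)‖ ^ 2 ∂μ) = ‖h‖ ^ 2 := by
      rw [hRHS, hCdef]
      have : (∫ x, ‖g x‖ ^ 2 ∂μ) = ∫ _x, ‖h‖ ^ 2 ∂μ := by
        refine integral_congr_ae ?_
        filter_upwards [hgh] with x hx
        rw [hx]
      rw [this, integral_const]
      simp
    have hQf2 : ∀ f : H, ‖Q f‖ ^ 2 = ⟪f, h⟫ ^ 2 := by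
      intro f
      rw [hkey f]
      have : (∫ x, ⟪f, g x⟫ ^ 2 ∂μ) = ∫ _x, ⟪f, h⟫ ^ 2 ∂μ := by
        refine integral_congr_ae ?_
        filter_upwards [hgh] with x hx
        rw [hx]
      rw [this, integral_const]
      simp
    have hle : ‖Q‖ ≤ ‖h‖ := by
      refine Q.opNorm_le_bound (norm_nonneg h) fun f => ?_
      have h2 : ‖Q f‖ ^ 2 ≤ (‖h‖ * ‖f‖) ^ 2 := by
        rw [hQf2 f]
        have h1 := abs_real_inner_le_norm f h
        nlinarith [sq_abs ⟪f, h⟫, abs_nonneg ⟪f, h⟫, norm_nonneg f, norm_nonneg h]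
      calc ‖Q f‖ = Real.sqrt (‖Q f‖ ^ 2) := (Real.sqrt_sq (norm_nonneg _)).symm
        _ ≤ Real.sqrt ((‖h‖ * ‖f‖) ^ 2) := Real.sqrt_le_sqrt h2
        _ = ‖h‖ * ‖f‖ := Real.sqrt_sq (by positivity)
    have hge : ‖h‖ ≤ ‖Q‖ := by
      rcases eq_or_ne h 0 with rfl | hne
      · simp
      · have h4 : ‖Q h‖ ^ 2 = (‖h‖ ^ 2) ^ 2 := by
          rw [hQf2 h, real_inner_self_eq_norm_sq]
        have h3 : ‖Q h‖ = ‖h‖ ^ 2 := by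
          nlinarith [norm_nonneg (Q h), sq_nonneg (‖Q h‖ - ‖h‖ ^ 2), sq_nonneg (‖Q h‖ + ‖h‖ ^ 2), sq_nonneg ‖h‖]
        have h5 : ‖Q h‖ ≤ ‖Q‖ * ‖h‖ := Q.le_opNorm h
        rw [h3] at h5
        have hpos : 0 < ‖h‖ := norm_pos_iff.mpr hne
        nlinarith
    rw [hRHSh]
    have hQh : ‖Q‖ = ‖h‖ := le_antisymm hle hge
    rw [hQh]
end

section
/- If the RKHS H ⊂ C₀(E) is densely and continuously embedded into both L²(μ) and L²(ν), then for every δ > 0 there exists a Hilbert–Schmidt operator A : H → H with ‖A − P‖_{H → L²(μ)} < δ; in particular there is a sequence of finite-rank operators A_n on H with ‖A_n − P‖_{H → L²(μ)} → 0. -/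
open MeasureTheory ProbabilityTheory
open scoped RealInnerProductSpace


set_option maxHeartbeats 1000000 in
lemma exists_finiteRank_approx {H K ι : Type*}
    [NormedAddCommGroup H] [InnerProductSpace ℝ H] [CompleteSpace H]
    [NormedAddCommGroup K] [NormedSpace ℝ K]
    (b : HilbertBasis ι ℝ H) (T j : H →L[ℝ] K)
    (hsum : Summable fun i => ‖T (b i)‖ ^ 2)
    (hd : DenseRange j) {δ : ℝ} (hδ : 0 < δ) :
    ∃ A : H →L[ℝ] H,
      (Summable fun i => ‖A (b i)‖ ^ 2) ∧
      FiniteDimensional ℝ (LinearMap.range A.toLinearMap) ∧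
      ‖j.comp A - T‖ < δ := by
  classical
  set ε : ℝ := δ / 4 with hε
  have hεpos : 0 < ε := by positivity
  set s : ι → ℝ := fun i => ‖T (b i)‖ with hs
  -- choose finite set F capturing most of the HS norm
  obtain ⟨F, hF⟩ := (hsum.hasSum.eventually
    (Metric.ball_mem_nhds _ (show (0:ℝ) < ε ^ 2 by positivity))).exists
  have hFdist : |∑ i ∈ F, s i ^ 2 - ∑' i, s i ^ 2| < ε ^ 2 := by
    simpa [Real.dist_eq] using hF
  set t : ι → ℝ := fun i => if i ∈ F then 0 else s i ^ 2 with ht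
  have htsummable : Summable t := by
    refine Summable.of_nonneg_of_le (fun i => ?_) (fun i => ?_) hsum
    · by_cases h : i ∈ F <;> simp [ht, h, sq_nonneg]
    · by_cases h : i ∈ F <;> simp [ht, h, hs, sq_nonneg]
  have htail : ∑' i, t i < ε ^ 2 := by
    have hu : (fun i => if i ∈ F then s i ^ 2 else 0) = fun i => s i ^ 2 - t i := by
      funext i; by_cases h : i ∈ F <;> simp [ht, h]
    have husum : ∑' i, (if i ∈ F then s i ^ 2 else 0) = ∑ i ∈ F, s i ^ 2 := by
      rw [tsum_eq_sum (s := F) (fun i hi => by simp [hi])]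
      exact Finset.sum_congr rfl fun i hi => by simp [hi]
    have h2 : ∑' i, (s i ^ 2 - t i) = ∑' i, s i ^ 2 - ∑' i, t i :=
      Summable.tsum_sub hsum htsummable
    have h3 : ∑ i ∈ F, s i ^ 2 = ∑' i, s i ^ 2 - ∑' i, t i := by
      rw [← husum, hu, h2]
    have h4 : ∑' i, t i = ∑' i, s i ^ 2 - ∑ i ∈ F, s i ^ 2 := by linarith
    rw [h4]
    calc ∑' i, s i ^ 2 - ∑ i ∈ F, s i ^ 2 ≤ |∑ i ∈ F, s i ^ 2 - ∑' i, s i ^ 2| := by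
          rw [abs_sub_comm]; exact le_abs_self _
      _ < ε ^ 2 := hFdist
  -- choose approximants hv i with j (hv i) close to T (b i)
  have hch : ∀ i : ι, ∃ v : H, dist (T (b i)) (j v) < ε / (F.card + 1) := fun i =>
    hd.exists_dist_lt _ (by positivity)
  choose hv hhv using hch
  set A : H →L[ℝ] H := ∑ i ∈ F, (innerSL ℝ (b i)).smulRight (hv i) with hA
  have hAapp : ∀ f : H, A f = ∑ i ∈ F, ⟪b i, f⟫ • hv i := fun f => by
    simp [hA, ContinuousLinearMap.sum_apply]
  have hAb : ∀ k, k ∉ F → A (b k) = 0 := by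
    intro k hk
    rw [hAapp]
    refine Finset.sum_eq_zero fun i hi => ?_
    have hik : i ≠ k := fun h => hk (h ▸ hi)
    rw [b.orthonormal.2 hik, zero_smul]
  refine ⟨A, ?_, ?_, ?_⟩
  · exact summable_of_ne_finset_zero (s := F) fun k hk => by simp [hAb k hk]
  · have hle : LinearMap.range A.toLinearMap ≤ Submodule.span ℝ (hv '' ↑F) := by
      rintro y ⟨f, rfl⟩
      rw [ContinuousLinearMap.coe_coe, hAapp]
      refine Submodule.sum_mem _ fun i hi => Submodule.smul_mem _ _ ?_
      exact Submodule.subset_span ⟨i, hi, rfl⟩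
    haveI : FiniteDimensional ℝ (Submodule.span ℝ (hv '' ↑F)) :=
      FiniteDimensional.span_of_finite ℝ (F.finite_toSet.image hv)
    exact Submodule.finiteDimensional_of_le hle
  · -- norm bound
    have key : ∀ f : H, ‖(j.comp A - T) f‖ ≤ (δ / 2) * ‖f‖ := by
      intro f
      set c : ι → ℝ := fun i => ⟪b i, f⟫ with hc
      have hsf : HasSum (fun i => c i • b i) f := by
        simpa [hc, b.repr_apply_apply] using b.hasSum_repr f
      set d : ι → ℝ := fun i => if i ∈ F then 0 else c i with hd'
      set g : H := f - ∑ i ∈ F, c i • b i with hg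
      have hcle : ∀ G : Finset ι, ∑ i ∈ G, c i ^ 2 ≤ ‖f‖ ^ 2 := by
        intro G
        have := b.orthonormal.sum_inner_products_le (𝕜 := ℝ) (s := G) f
        simpa [hc, Real.norm_eq_abs, sq_abs] using this
      have hdle : ∀ G : Finset ι, ∑ i ∈ G, d i ^ 2 ≤ ‖f‖ ^ 2 := by
        intro G
        refine le_trans (Finset.sum_le_sum fun i _ => ?_) (hcle G)
        by_cases h : i ∈ F <;> simp [hd', h, sq_nonneg]
      have h1 : HasSum (fun i => if i ∈ F then c i • b i else 0)
          (∑ i ∈ F, c i • b i) := by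
        have h0 := hasSum_sum_of_ne_finset_zero
          (L := SummationFilter.unconditional ι)
          (s := F) (f := fun i => if i ∈ F then c i • b i else 0)
          (fun i hi => by simp [hi])
        have he : ∑ i ∈ F, (if i ∈ F then c i • b i else 0) = ∑ i ∈ F, c i • b i :=
          Finset.sum_congr rfl fun i hi => by simp [hi]
        rwa [he] at h0
      have hgsum : HasSum (fun i => d i • b i) g := by
        have h2 := hsf.sub h1
        refine h2.congr_fun fun i => ?_
        by_cases h : i ∈ F <;> simp [hd', h]
      have hTg : HasSum (fun i => d i • T (b i)) (T g) := by
        have := hgsum.mapL T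
        simpa using this
      have hq : ∀ i, ‖d i • T (b i)‖ = |d i| * s i := fun i => by
        simp [hs, norm_smul, Real.norm_eq_abs]
      have hqbound : ∀ G : Finset ι, ∑ i ∈ G, |d i| * s i ≤ ‖f‖ * ε := by
        intro G
        have hpt : ∀ i ∈ G, |d i| * s i = |d i| * (if i ∈ F then 0 else s i) := by
          intro i _
          by_cases h : i ∈ F <;> simp [hd', h]
        rw [Finset.sum_congr rfl hpt]
        have hCS := Finset.sum_mul_sq_le_sq_mul_sq G (fun i => |d i|)
          (fun i => if i ∈ F then 0 else s i)
        have hGd : ∑ i ∈ G, |d i| ^ 2 ≤ ‖f‖ ^ 2 := by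
          simpa [sq_abs] using hdle G
        have hGt : ∑ i ∈ G, (if i ∈ F then 0 else s i) ^ 2 ≤ ∑' i, t i := by
          refine le_trans (le_of_eq (Finset.sum_congr rfl fun i _ => ?_))
            (Summable.sum_le_tsum G (fun i _ => ?_) htsummable)
          · by_cases h : i ∈ F <;> simp [ht, h]
          · by_cases h : i ∈ F <;> simp [ht, h, sq_nonneg]
        have hsum_nonneg : 0 ≤ ∑ i ∈ G, |d i| * (if i ∈ F then 0 else s i) := by
          refine Finset.sum_nonneg fun i _ => mul_nonneg (abs_nonneg _) ?_
          by_cases h : i ∈ F <;> simp [hs, h]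
        have hsq : (∑ i ∈ G, |d i| * (if i ∈ F then 0 else s i)) ^ 2
            ≤ (‖f‖ * ε) ^ 2 := by
          refine le_trans hCS ?_
          rw [mul_pow]
          exact mul_le_mul hGd (le_trans hGt htail.le)
            (Finset.sum_nonneg fun i _ => sq_nonneg _) (sq_nonneg ‖f‖)
        exact (pow_le_pow_iff_left₀ hsum_nonneg (by positivity) two_ne_zero).mp hsq
      have hqsummable : Summable (fun i => |d i| * s i) :=
        summable_of_sum_le (fun i => mul_nonneg (abs_nonneg _) (norm_nonneg _)) hqbound
      have hTgnorm : ‖T g‖ ≤ ‖f‖ * ε := by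
        rw [← hTg.tsum_eq]
        refine le_trans (norm_tsum_le_tsum_norm ?_) ?_
        · simpa [hq] using hqsummable
        · calc ∑' i, ‖d i • T (b i)‖ = ∑' i, |d i| * s i := by simp [hq]
            _ ≤ ‖f‖ * ε := Summable.tsum_le_of_sum_le hqsummable hqbound
      have hTf : T f = ∑ i ∈ F, c i • T (b i) + T g := by
        have hTs : T (∑ i ∈ F, c i • b i) = ∑ i ∈ F, c i • T (b i) := by
          rw [map_sum]; exact Finset.sum_congr rfl fun i _ => T.map_smul _ _
        rw [hg, map_sub, hTs]; abel
      have happ : (j.comp A - T) f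
          = ∑ i ∈ F, c i • (j (hv i) - T (b i)) - T g := by
        have hsplit : ∑ i ∈ F, c i • (j (hv i) - T (b i))
            = ∑ i ∈ F, c i • j (hv i) - ∑ i ∈ F, c i • T (b i) := by
          rw [← Finset.sum_sub_distrib]
          exact Finset.sum_congr rfl fun i _ => smul_sub _ _ _
        have hjA : j (A f) = ∑ i ∈ F, c i • j (hv i) := by
          rw [hAapp, map_sum]
          exact Finset.sum_congr rfl fun i _ => j.map_smul _ _
        simp only [ContinuousLinearMap.sub_apply, ContinuousLinearMap.comp_apply]
        rw [hjA, hTf, hsplit]; abel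
      have hterm : ∀ i ∈ F, ‖c i • (j (hv i) - T (b i))‖ ≤ ‖f‖ * (ε / (F.card + 1)) := by
        intro i _
        rw [norm_smul, Real.norm_eq_abs]
        have h1 : |c i| ≤ ‖f‖ := by
          have := abs_real_inner_le_norm (b i) f
          simpa [hc, b.orthonormal.1 i] using this
        have h2 : ‖j (hv i) - T (b i)‖ ≤ ε / (F.card + 1) := by
          have := hhv i
          rw [dist_eq_norm, norm_sub_rev] at this
          exact this.le
        exact mul_le_mul h1 h2 (norm_nonneg _) (norm_nonneg _)
      calc ‖(j.comp A - T) f‖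
          ≤ ‖∑ i ∈ F, c i • (j (hv i) - T (b i))‖ + ‖T g‖ := by
            rw [happ]; exact norm_sub_le _ _
        _ ≤ (∑ i ∈ F, ‖c i • (j (hv i) - T (b i))‖) + ‖f‖ * ε :=
            add_le_add (norm_sum_le _ _) hTgnorm
        _ ≤ (∑ _i ∈ F, ‖f‖ * (ε / (F.card + 1))) + ‖f‖ * ε :=
            add_le_add (Finset.sum_le_sum hterm) le_rfl
        _ = ‖f‖ * (F.card * (ε / (F.card + 1))) + ‖f‖ * ε := by
            rw [Finset.sum_const, nsmul_eq_mul]; ring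
        _ ≤ ‖f‖ * ε + ‖f‖ * ε := by
            have hc1 : (0:ℝ) < (F.card : ℝ) + 1 := by positivity
            have hcard : (F.card : ℝ) * (ε / (F.card + 1)) ≤ ε := by
              have h5 : (F.card : ℝ) * (ε / (F.card + 1))
                  ≤ ((F.card : ℝ) + 1) * (ε / (F.card + 1)) :=
                mul_le_mul_of_nonneg_right (by linarith) (by positivity)
              have h6 : ((F.card : ℝ) + 1) * (ε / (F.card + 1)) = ε := by
                field_simp
              linarith
            exact add_le_add (mul_le_mul_of_nonneg_left hcard (norm_nonneg f)) le_rfl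
        _ = (δ / 2) * ‖f‖ := by rw [hε]; ring
    have hle2 : ‖j.comp A - T‖ ≤ δ / 2 :=
      ContinuousLinearMap.opNorm_le_bound _ (by positivity) key
    linarith

/-- If the RKHS `H ⊂ C₀(E)` (with feature map `φ`, functions realized as
`x ↦ ⟪f, φ x⟫`) is densely and continuously embedded into both `L²(μ)` and `L²(ν)`
via the inclusions `iμ`, `iν`, then for every `δ > 0` there is a Hilbert–Schmidt
operator `A : H → H` with `‖A − P‖_{H → L²(μ)} < δ`; in particular there is a
sequence of finite-rank operators `Aₙ` on `H` with `‖Aₙ − P‖_{H → L²(μ)} → 0`. -/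
theorem approximation_by_hilbert_schmidt
    {E H ι : Type*}
    [TopologicalSpace E] [SecondCountableTopology E] [LocallyCompactSpace E] [T2Space E]
    [MeasurableSpace E] [BorelSpace E]
    [NormedAddCommGroup H] [InnerProductSpace ℝ H] [CompleteSpace H]
    (μ ν : Measure E) [IsProbabilityMeasure μ] [IsProbabilityMeasure ν]
    (p : Kernel E E) [IsMarkovKernel p]
    (hmarg : μ.bind (fun x => p x) = ν)
    (φ : E → H) (hφmeas : StronglyMeasurable φ)
    (hC0 : ∀ f : H, ∃ g : ZeroAtInftyContinuousMap E ℝ, ∀ x, g x = ⟪f, φ x⟫)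
    (iμ : H →L[ℝ] Lp ℝ 2 μ)
    (hiμ : ∀ f : H, (iμ f : E → ℝ) =ᵐ[μ] fun x => ⟪f, φ x⟫)
    (iν : H →L[ℝ] Lp ℝ 2 ν)
    (hiν : ∀ f : H, (iν f : E → ℝ) =ᵐ[ν] fun x => ⟪f, φ x⟫)
    (hdμ : DenseRange iμ) (hdν : DenseRange iν)
    (P : Lp ℝ 2 ν →L[ℝ] Lp ℝ 2 μ)
    (hP : ∀ f : Lp ℝ 2 ν, (P f : E → ℝ) =ᵐ[μ] fun x => ∫ y, f y ∂(p x))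
    (b : HilbertBasis ι ℝ H) :
    (∀ δ > (0 : ℝ), ∃ A : H →L[ℝ] H,
      (Summable fun i => ‖A (b i)‖ ^ 2) ∧ ‖iμ.comp A - P.comp iν‖ < δ) ∧
    ∃ Aseq : ℕ → H →L[ℝ] H,
      (∀ n, FiniteDimensional ℝ (LinearMap.range (Aseq n).toLinearMap)) ∧
      Filter.Tendsto (fun n => ‖iμ.comp (Aseq n) - P.comp iν‖)
        Filter.atTop (nhds 0) := by
  classical
  -- Step 1: uniform bound on the feature map, by Banach–Steinhaus
  obtain ⟨C, hCnn, hC⟩ : ∃ C : ℝ, 0 ≤ C ∧ ∀ x : E, ‖φ x‖ ≤ C := by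
    have h := banach_steinhaus (g := fun x : E => innerSL ℝ (φ x)) ?_
    · obtain ⟨C', hC'⟩ := h
      refine ⟨max C' 0, le_max_right _ _, fun x => ?_⟩
      have := hC' x
      rw [innerSL_apply_norm] at this
      exact this.trans (le_max_left _ _)
    · intro f
      obtain ⟨g0, hg0⟩ := hC0 f
      refine ⟨‖g0.toBCF‖, fun x => ?_⟩
      have hx : (innerSL ℝ (φ x)) f = g0 x := by
        rw [hg0 x]; exact (real_inner_comm _ _)
      calc ‖(innerSL ℝ (φ x)) f‖ = |g0 x| := by rw [hx, Real.norm_eq_abs]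
        _ ≤ ‖g0.toBCF‖ := by simpa using g0.toBCF.norm_coe_le_norm x
  -- Step 2: iν is Hilbert–Schmidt along the basis b
  have hnormsq : ∀ u : H, ‖iν u‖ ^ 2 = ∫ x, (iν u : E → ℝ) x * (iν u : E → ℝ) x ∂ν := by
    intro u
    rw [← real_inner_self_eq_norm_sq, L2.inner_def]
    simp [RCLike.inner_apply]
    simp only [sq]
  have hint : ∀ u : H, Integrable (fun x => (iν u : E → ℝ) x * (iν u : E → ℝ) x) ν := by
    intro u
    simpa [RCLike.inner_apply, ← sq] using L2.integrable_inner (𝕜 := ℝ) (iν u) (iν u)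
  have hFsum : ∀ F : Finset ι, ∑ i ∈ F, ‖iν (b i)‖ ^ 2 ≤ C ^ 2 := by
    intro F
    have h1 : ∑ i ∈ F, ‖iν (b i)‖ ^ 2
        = ∫ x, (∑ i ∈ F, (iν (b i) : E → ℝ) x * (iν (b i) : E → ℝ) x) ∂ν := by
      rw [integral_finset_sum F (fun i _ => hint (b i))]
      exact Finset.sum_congr rfl fun i _ => hnormsq (b i)
    have hae : ∀ᵐ x ∂ν, ∀ i ∈ (F : Set ι), (iν (b i) : E → ℝ) x = ⟪b i, φ x⟫ :=
      (MeasureTheory.ae_ball_iff F.countable_toSet).mpr fun i _ => hiν (b i)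
    have h2 : ∫ x, (∑ i ∈ F, (iν (b i) : E → ℝ) x * (iν (b i) : E → ℝ) x) ∂ν
        ≤ ∫ _x, C ^ 2 ∂ν := by
      refine integral_mono_ae (integrable_finset_sum F fun i _ => hint (b i))
        (integrable_const _) ?_
      filter_upwards [hae] with x hx
      have h3 : ∑ i ∈ F, (iν (b i) : E → ℝ) x * (iν (b i) : E → ℝ) x
          = ∑ i ∈ F, ⟪b i, φ x⟫ ^ 2 := by
        refine Finset.sum_congr rfl fun i hi => ?_
        rw [hx i hi, sq]
      rw [h3]
      have hbessel : ∑ i ∈ F, ⟪b i, φ x⟫ ^ 2 ≤ ‖φ x‖ ^ 2 := by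
        have := b.orthonormal.sum_inner_products_le (𝕜 := ℝ) (s := F) (φ x)
        simpa [Real.norm_eq_abs, sq_abs] using this
      exact hbessel.trans (pow_le_pow_left₀ (norm_nonneg _) (hC x) 2)
    have h4 : ∫ _x : E, C ^ 2 ∂ν = C ^ 2 := by simp [measure_univ]
    rw [h1]
    exact h2.trans h4.le
  have hsν : Summable fun i => ‖iν (b i)‖ ^ 2 :=
    summable_of_sum_le (fun i => sq_nonneg _) hFsum
  -- Step 3: T = P ∘ iν is Hilbert–Schmidt along b
  have hsT : Summable fun i => ‖(P.comp iν) (b i)‖ ^ 2 := by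
    refine Summable.of_nonneg_of_le (fun i => sq_nonneg _) (fun i => ?_)
      (hsν.mul_left (‖P‖ ^ 2))
    have h1 : ‖(P.comp iν) (b i)‖ ≤ ‖P‖ * ‖iν (b i)‖ := by
      rw [ContinuousLinearMap.comp_apply]
      exact P.le_opNorm _
    calc ‖(P.comp iν) (b i)‖ ^ 2 ≤ (‖P‖ * ‖iν (b i)‖) ^ 2 :=
          pow_le_pow_left₀ (norm_nonneg _) h1 2
      _ = ‖P‖ ^ 2 * ‖iν (b i)‖ ^ 2 := mul_pow _ _ _
  -- Step 4: conclude via the generic approximation lemma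
  constructor
  · intro δ hδ
    obtain ⟨A, h1, _, h3⟩ := exists_finiteRank_approx b (P.comp iν) iμ hsT hdμ hδ
    exact ⟨A, h1, h3⟩
  · have hex : ∀ n : ℕ, ∃ A : H →L[ℝ] H,
        (Summable fun i => ‖A (b i)‖ ^ 2) ∧
        FiniteDimensional ℝ (LinearMap.range A.toLinearMap) ∧
        ‖iμ.comp A - P.comp iν‖ < 1 / (n + 1) :=
      fun n => exists_finiteRank_approx b (P.comp iν) iμ hsT hdμ
        (show (0:ℝ) < 1 / (n + 1) by positivity)
    choose Aseq _h1 h2 h3 using hex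
    refine ⟨Aseq, h2, ?_⟩
    refine squeeze_zero (fun n => norm_nonneg _) (fun n => (h3 n).le) ?_
    exact tendsto_one_div_add_atTop_nhds_zero_nat
end

section
/- If the kernel k is characteristic, then ‖P − P'‖_{H→L²(μ)} = 0 if and only if p(x, ·) = p'(x, ·) for μ-almost every x ∈ E. -/
open MeasureTheory ProbabilityTheory
open scoped RealInnerProductSpace

/-- If the kernel (with feature map `φ`) is characteristic, then
`‖P − P'‖_{H→L²(μ)} = 0` if and only if `p(x,·) = p'(x,·)` for `μ`-almost every `x`.
The difference operator `P − P' : H → L²(μ)` is encoded as `Q`. -/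
theorem characteristic_kernel_ae_equality
    {E H : Type*} [MeasurableSpace E]
    [NormedAddCommGroup H] [InnerProductSpace ℝ H] [CompleteSpace H]
    (μ : Measure E) [IsProbabilityMeasure μ]
    (p p' : Kernel E E) [IsMarkovKernel p] [IsMarkovKernel p']
    (φ : E → H) (hφmeas : StronglyMeasurable φ)
    (hφμ : MemLp φ 2 μ)
    (hint : ∀ x, Integrable φ (p x)) (hint' : ∀ x, Integrable φ (p' x))
    (hchar : ∀ π π' : Measure E, IsProbabilityMeasure π → IsProbabilityMeasure π' →
      (∫ y, φ y ∂π) = (∫ y, φ y ∂π') → π = π')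
    (Q : H →L[ℝ] Lp ℝ 2 μ)
    (hQ : ∀ f : H, (Q f : E → ℝ) =ᵐ[μ]
      fun x => (∫ y, ⟪f, φ y⟫ ∂(p x)) - ∫ y, ⟪f, φ y⟫ ∂(p' x)) :
    ‖Q‖ = 0 ↔ ∀ᵐ x ∂μ, p x = p' x := by
  set m : E → H := fun x => ∫ y, φ y ∂(p x) with hm
  set m' : E → H := fun x => ∫ y, φ y ∂(p' x) with hm'
  -- closed subspace generated by the range of φ
  set K : Submodule ℝ H := (Submodule.span ℝ (Set.range φ)).topologicalClosure with hK
  have hKclosed : IsClosed (K : Set H) := Submodule.isClosed_topologicalClosure _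
  have hKconvex : Convex ℝ (K : Set H) := K.convex
  have hKsep : TopologicalSpace.IsSeparable (K : Set H) := by
    rw [hK, Submodule.topologicalClosure_coe]
    exact hφmeas.isSeparable_range.span.closure
  have hφK : ∀ y, φ y ∈ K := fun y =>
    Submodule.le_topologicalClosure _ (Submodule.subset_span (Set.mem_range_self y))
  have hmK : ∀ x, m x ∈ K := fun x =>
    hKconvex.integral_mem hKclosed (Filter.Eventually.of_forall fun y => hφK y) (hint x)
  have hm'K : ∀ x, m' x ∈ K := fun x =>
    hKconvex.integral_mem hKclosed (Filter.Eventually.of_forall fun y => hφK y) (hint' x)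
  constructor
  · intro hnorm
    have hQ0 : Q = 0 := by
      rwa [← ContinuousLinearMap.opNorm_zero_iff]
    -- for each f, a.e. ⟪f, m x - m' x⟫ = 0
    have key : ∀ f : H, (fun x => ⟪f, m x - m' x⟫) =ᵐ[μ] 0 := by
      intro f
      have h1 : (Q f : E → ℝ) =ᵐ[μ]
          fun x => (∫ y, ⟪f, φ y⟫ ∂(p x)) - ∫ y, ⟪f, φ y⟫ ∂(p' x) := hQ f
      have h2 : (Q f : E → ℝ) =ᵐ[μ] 0 := by
        rw [hQ0]
        simpa using Lp.coeFn_zero ℝ 2 μ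
      have h3 : (fun x => ⟪f, m x - m' x⟫) =ᵐ[μ]
          fun x => (∫ y, ⟪f, φ y⟫ ∂(p x)) - ∫ y, ⟪f, φ y⟫ ∂(p' x) := by
        refine Filter.Eventually.of_forall fun x => ?_
        simp only [inner_sub_right]
        rw [hm, hm', ← integral_inner (hint x) f, ← integral_inner (hint' x) f]
      exact h3.trans (h1.symm.trans h2)
    -- deduce m x = m' x a.e. using separability
    have hsub : (fun x => m x - m' x) =ᵐ[μ] 0 := by
      refine ae_eq_zero_of_forall_dual_of_isSeparable ℝ hKsep (fun c => ?_)
        (Filter.Eventually.of_forall fun x => sub_mem (hmK x) (hm'K x))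
      have := key ((InnerProductSpace.toDual ℝ H).symm c)
      refine this.mono fun x hx => ?_
      simpa [InnerProductSpace.toDual_symm_apply] using hx
    refine hsub.mono fun x hx => ?_
    have hmm : m x = m' x := sub_eq_zero.mp hx
    exact hchar (p x) (p' x) inferInstance inferInstance hmm
  · intro hae
    have hQ0 : Q = 0 := by
      ext f
      refine (hQ f).trans (Filter.EventuallyEq.trans ?_ (Lp.coeFn_zero ℝ 2 μ).symm)
      filter_upwards [hae] with x hx
      simp [hx]
    rw [hQ0]
    simp
end

section
/- Let X, X', Y, Y' be E-valued random variables with X ∼ μ and X' ∼ μ, and let P, P' : H → L²(μ) be the bounded conditional expectation operators Pf = E[f(Y)|X = ·] and P'f = E[f(Y')|X' = ·]. If the kernel k is characteristic, then ‖P − P'‖_{H→L²(μ)} = 0 if and only if the joint laws satisfy L(X,Y) = L(X',Y'). -/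
open MeasureTheory ProbabilityTheory Filter
open scoped RealInnerProductSpace Topology

private lemma clamp_abs_le (a : ℝ) (n : ℕ) : |max (-(n : ℝ)) (min (n : ℝ) a)| ≤ |a| := by
  rcases le_total a 0 with h | h
  · rw [min_eq_right (h.trans (Nat.cast_nonneg n))]
    have h2 : max (-(n : ℝ)) a ≤ 0 := max_le (neg_nonpos.2 (Nat.cast_nonneg n)) h
    rw [abs_of_nonpos h2, abs_of_nonpos h]
    exact neg_le_neg (le_max_right _ _)
  · have hmin : (0 : ℝ) ≤ min (n : ℝ) a := le_min (Nat.cast_nonneg n) h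
    rw [max_eq_right ((neg_nonpos.2 (Nat.cast_nonneg n)).trans hmin),
      abs_of_nonneg hmin, abs_of_nonneg h]
    exact min_le_right _ _

private lemma clamp_le_n (a : ℝ) (n : ℕ) : |max (-(n : ℝ)) (min (n : ℝ) a)| ≤ (n : ℝ) := by
  rw [abs_le]
  refine ⟨le_max_left _ _, max_le ?_ (min_le_left _ _)⟩
  have := Nat.cast_nonneg (α := ℝ) n
  linarith

private lemma clamp_tendsto (a : ℝ) :
    Tendsto (fun n : ℕ => max (-(n : ℝ)) (min (n : ℝ) a)) atTop (𝓝 a) := by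
  apply tendsto_atTop_of_eventually_const (i₀ := ⌈|a|⌉₊)
  intro n hn
  have h : |a| ≤ (n : ℝ) := by
    calc |a| ≤ (⌈|a|⌉₊ : ℝ) := Nat.le_ceil _
    _ ≤ (n : ℝ) := Nat.cast_le.2 hn
  have h1 : a ≤ (n : ℝ) := (le_abs_self a).trans h
  have h2 : -(n : ℝ) ≤ a := by
    have := neg_abs_le a
    linarith
  rw [min_eq_right h1, max_eq_right h2]

/-- Let `X, X', Y, Y'` be `E`-valued random variables with `X ∼ μ`, `X' ∼ μ`, and let
`P, P' : H → L²(μ)` be the conditional expectation operators `Pf = E[f(Y)|X = ·]`,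
`P'f = E[f(Y')|X' = ·]` given by the Markov kernels `p, p'` (difference encoded as `Q`).
If the kernel is characteristic, then `‖P − P'‖_{H→L²(μ)} = 0` iff the joint laws
agree: `L(X,Y) = μ ⊗ₘ p = μ ⊗ₘ p' = L(X',Y')`. -/
theorem characteristic_kernel_joint_law
    {E H : Type*} [MeasurableSpace E]
    [NormedAddCommGroup H] [InnerProductSpace ℝ H] [CompleteSpace H]
    (μ : Measure E) [IsProbabilityMeasure μ]
    (p p' : Kernel E E) [IsMarkovKernel p] [IsMarkovKernel p']
    (φ : E → H) (hφmeas : StronglyMeasurable φ)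
    (hφμ : MemLp φ 2 μ)
    (hint : ∀ x, Integrable φ (p x)) (hint' : ∀ x, Integrable φ (p' x))
    (hchar : ∀ π π' : Measure E, IsProbabilityMeasure π → IsProbabilityMeasure π' →
      (∫ y, φ y ∂π) = (∫ y, φ y ∂π') → π = π')
    (Q : H →L[ℝ] Lp ℝ 2 μ)
    (hQ : ∀ f : H, (Q f : E → ℝ) =ᵐ[μ]
      fun x => (∫ y, ⟪f, φ y⟫ ∂(p x)) - ∫ y, ⟪f, φ y⟫ ∂(p' x)) :
    ‖Q‖ = 0 ↔ μ.compProd p = μ.compProd p' := by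
  constructor
  · intro hnorm
    have hQ0 : Q = 0 := norm_eq_zero.mp hnorm
    obtain ⟨c, hc_count, hc_sub⟩ := hφmeas.isSeparable_range
    have key : ∀ f : H, ∀ᵐ x ∂μ,
        (∫ y, ⟪f, φ y⟫ ∂(p x)) = ∫ y, ⟪f, φ y⟫ ∂(p' x) := by
      intro f
      have h2 : (Q f : E → ℝ) =ᵐ[μ] 0 := by
        rw [hQ0]
        simpa using Lp.coeFn_zero ℝ 2 μ
      filter_upwards [hQ f, h2] with x hx1 hx2
      have h3 : (∫ y, ⟪f, φ y⟫ ∂(p x)) - ∫ y, ⟪f, φ y⟫ ∂(p' x) = 0 := by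
        have := hx1.symm.trans hx2
        simpa using this
      linarith
    have hae : ∀ᵐ x ∂μ, ∀ f ∈ c, (∫ y, ⟪f, φ y⟫ ∂(p x)) = ∫ y, ⟪f, φ y⟫ ∂(p' x) :=
      (ae_ball_iff hc_count).2 fun f _ => key f
    have hpp : p =ᵐ[μ] p' := by
      filter_upwards [hae] with x hx
      have hab : (∫ y, φ y ∂(p x)) = ∫ y, φ y ∂(p' x) := by
        set a : H := ∫ y, φ y ∂(p x) with ha
        set b : H := ∫ y, φ y ∂(p' x) with hb
        have hzero : ∀ f ∈ closure c, ⟪f, a - b⟫ = 0 := by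
          have hEq : Set.EqOn (fun f : H => ⟪f, a - b⟫) (fun _ => (0 : ℝ)) c := by
            intro f hf
            have h1 : (∫ y, ⟪f, φ y⟫ ∂(p x)) = ⟪f, a⟫ := integral_inner (hint x) f
            have h2 : (∫ y, ⟪f, φ y⟫ ∂(p' x)) = ⟪f, b⟫ := integral_inner (hint' x) f
            simp only [inner_sub_right]
            rw [← h1, ← h2, hx f hf, sub_self]
          exact fun f hf =>
            hEq.closure (continuous_id.inner continuous_const) continuous_const hf
        have hrange : ∀ y : E, ⟪a - b, φ y⟫ = 0 := fun y => by
          rw [real_inner_comm]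
          exact hzero _ (hc_sub (Set.mem_range_self y))
        have hA : ⟪a - b, a⟫ = 0 := by
          rw [ha, ← integral_inner (hint x) (a - b)]
          rw [show (fun y => ⟪a - b, φ y⟫) = fun _ => (0 : ℝ) from funext hrange]
          exact integral_zero _ _
        have hB : ⟪a - b, b⟫ = 0 := by
          rw [hb, ← integral_inner (hint' x) (a - b)]
          rw [show (fun y => ⟪a - b, φ y⟫) = fun _ => (0 : ℝ) from funext hrange]
          exact integral_zero _ _
        have : ⟪a - b, a - b⟫ = 0 := by rw [inner_sub_right, hA, hB, sub_zero]
        exact sub_eq_zero.mp (inner_self_eq_zero.mp this)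
      exact hchar (p x) (p' x) inferInstance inferInstance hab
    exact Measure.compProd_congr hpp
  · intro hpp
    have hQ0 : Q = 0 := by
      refine ContinuousLinearMap.ext fun f => ?_
      rw [ContinuousLinearMap.zero_apply]
      refine Lp.ext ((hQ f).trans ?_ |>.trans (Lp.coeFn_zero ℝ 2 μ).symm)
      -- show the difference of conditional means is a.e. zero
      set g : E → ℝ := fun y => ⟪f, φ y⟫ with hgdef
      have hg_sm : StronglyMeasurable g := stronglyMeasurable_const.inner hφmeas
      set gn : ℕ → E → ℝ := fun n y => max (-(n : ℝ)) (min (n : ℝ) (g y)) with hgndef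
      have hgn_sm : ∀ n, StronglyMeasurable (gn n) := fun n =>
        (measurable_const.max (measurable_const.min hg_sm.measurable)).stronglyMeasurable
      have hgn_bound : ∀ n y, |gn n y| ≤ (n : ℝ) := fun n y => clamp_le_n (g y) n
      have hgn_le : ∀ n y, |gn n y| ≤ |g y| := fun n y => clamp_abs_le (g y) n
      have hgn_tendsto : ∀ y, Tendsto (fun n => gn n y) atTop (𝓝 (g y)) := fun y =>
        clamp_tendsto (g y)
      -- integrability facts
      have hmeas : ∀ (κ : Kernel E E), IsMarkovKernel κ → ∀ n : ℕ,
          StronglyMeasurable (fun x => ∫ y, gn n y ∂κ x) := by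
        intro κ hκ n
        exact StronglyMeasurable.integral_kernel_prod_right' (κ := κ)
          ((hgn_sm n).comp_measurable measurable_snd)
      have hbnd : ∀ (κ : Kernel E E), IsMarkovKernel κ → ∀ (n : ℕ) (x : E),
          ‖∫ y, gn n y ∂κ x‖ ≤ (n : ℝ) := by
        intro κ hκ n x
        have := norm_integral_le_of_norm_le_const (μ := κ x) (f := gn n) (C := (n : ℝ))
          (ae_of_all _ fun y => by simpa using hgn_bound n y)
        simpa using this
      have hFint : ∀ (κ : Kernel E E), IsMarkovKernel κ → ∀ n : ℕ,
          Integrable (fun x => ∫ y, gn n y ∂κ x) μ := by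
        intro κ hκ n
        exact (integrable_const (n : ℝ)).mono' (hmeas κ hκ n).aestronglyMeasurable
          (ae_of_all _ fun x => hbnd κ hκ n x)
      -- each truncated difference is a.e. zero
      have hFn_zero : ∀ n : ℕ,
          (fun x => (∫ y, gn n y ∂p x) - ∫ y, gn n y ∂p' x) =ᵐ[μ] 0 := by
        intro n
        refine Integrable.ae_eq_zero_of_forall_setIntegral_eq_zero
          ((hFint p inferInstance n).sub (hFint p' inferInstance n)) ?_
        intro s hs _
        set I : E × E → ℝ := fun z => s.indicator (fun _ => (1 : ℝ)) z.1 * gn n z.2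
          with hIdef
        have hI_meas : Measurable I :=
          ((measurable_const.indicator hs).comp measurable_fst).mul
            ((hgn_sm n).measurable.comp measurable_snd)
        have hI_bound : ∀ z, ‖I z‖ ≤ (n : ℝ) := by
          intro z
          have h1 : |s.indicator (fun _ => (1 : ℝ)) z.1| ≤ 1 := by
            by_cases hz : z.1 ∈ s <;> simp [Set.indicator_of_mem, Set.indicator_of_notMem, hz]
          calc ‖I z‖ = |s.indicator (fun _ => (1 : ℝ)) z.1| * |gn n z.2| := by
                rw [hIdef]; exact abs_mul _ _
            _ ≤ 1 * (n : ℝ) :=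
                mul_le_mul h1 (hgn_bound n z.2) (abs_nonneg _) zero_le_one
            _ = (n : ℝ) := one_mul _
        have keyκ : ∀ (κ : Kernel E E), IsMarkovKernel κ →
            (∫ z, I z ∂(μ.compProd κ)) = ∫ x in s, ∫ y, gn n y ∂κ x ∂μ := by
          intro κ hκ
          have hI_int : Integrable I (μ.compProd κ) :=
            (integrable_const (n : ℝ)).mono' hI_meas.aestronglyMeasurable
              (ae_of_all _ hI_bound)
          rw [Measure.integral_compProd hI_int]
          have : ∀ x, (∫ y, s.indicator (fun _ => (1 : ℝ)) x * gn n y ∂κ x)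
              = s.indicator (fun x => ∫ y, gn n y ∂κ x) x := by
            intro x
            rw [integral_const_mul]
            by_cases hx : x ∈ s <;>
              simp [Set.indicator_of_mem, Set.indicator_of_notMem, hx]
          rw [show (fun x => ∫ y, I (x, y) ∂κ x)
              = fun x => s.indicator (fun x => ∫ y, gn n y ∂κ x) x from funext this]
          exact integral_indicator hs
        calc ∫ x in s, ((∫ y, gn n y ∂p x) - ∫ y, gn n y ∂p' x) ∂μ
            = (∫ x in s, ∫ y, gn n y ∂p x ∂μ) - ∫ x in s, ∫ y, gn n y ∂p' x ∂μ :=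
              integral_sub ((hFint p inferInstance n).integrableOn)
                ((hFint p' inferInstance n).integrableOn)
          _ = (∫ z, I z ∂(μ.compProd p)) - ∫ z, I z ∂(μ.compProd p') := by
              rw [keyκ p inferInstance, keyκ p' inferInstance]
          _ = 0 := by rw [hpp, sub_self]
      have hall : ∀ᵐ x ∂μ, ∀ n : ℕ,
          (∫ y, gn n y ∂p x) - ∫ y, gn n y ∂p' x = 0 := by
        rw [ae_all_iff]
        intro n
        filter_upwards [hFn_zero n] with x hx using hx
      filter_upwards [hall] with x hx
      have hgint : Integrable g (p x) := (hint x).const_inner f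
      have hgint' : Integrable g (p' x) := (hint' x).const_inner f
      have hconv1 : Tendsto (fun n => ∫ y, gn n y ∂p x) atTop (𝓝 (∫ y, g y ∂p x)) :=
        tendsto_integral_of_dominated_convergence (fun y => |g y|)
          (fun n => (hgn_sm n).aestronglyMeasurable) hgint.abs
          (fun n => ae_of_all _ fun y => by simpa using hgn_le n y)
          (ae_of_all _ fun y => hgn_tendsto y)
      have hconv2 : Tendsto (fun n => ∫ y, gn n y ∂p' x) atTop (𝓝 (∫ y, g y ∂p' x)) :=
        tendsto_integral_of_dominated_convergence (fun y => |g y|)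
          (fun n => (hgn_sm n).aestronglyMeasurable) hgint'.abs
          (fun n => ae_of_all _ fun y => by simpa using hgn_le n y)
          (ae_of_all _ fun y => hgn_tendsto y)
      have h0 : Tendsto (fun n => (∫ y, gn n y ∂p x) - ∫ y, gn n y ∂p' x) atTop
          (𝓝 (0 : ℝ)) := tendsto_const_nhds.congr fun n => (hx n).symm
      have := tendsto_nhds_unique (hconv1.sub hconv2) h0
      simpa using this
    rw [hQ0, norm_zero]
end

section
/- (Well-specified case equivalence) The following are equivalent: (i) the conditional mean embedding F*(·) = E[φ(Y) | X = ·] is an element of the vector-valued RKHS G; (ii) there exists a Hilbert–Schmidt operator A on H such that ⟨f, A*φ(x)⟩_H = E[f(Y) | X = x] for all x ∈ E and f ∈ H. Moreover, either implies the existence of a Hilbert–Schmidt operator A on H with ‖A − P‖_{H→L²(μ)} = 0. -/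
open MeasureTheory ProbabilityTheory
open scoped RealInnerProductSpace NNReal

set_option maxHeartbeats 1000000

set_option linter.unusedSectionVars false
set_option maxHeartbeats 1000000

section CMEAux

variable {E H G : Type*}
  [NormedAddCommGroup H] [InnerProductSpace ℝ H] [CompleteSpace H]
  [NormedAddCommGroup G] [InnerProductSpace ℝ G] [CompleteSpace G]
  {φ : E → H} {Kx : E → H →L[ℝ] G}

lemma cme_inner_lc
    (hK : ∀ (x x' : E) (h h' : H), ⟪Kx x h, Kx x' h'⟫ = ⟪φ x, φ x'⟫ * ⟪h, h'⟫)
    (f g : H) (c d : E →₀ ℝ) :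
    ⟪Finsupp.linearCombination ℝ (fun x => Kx x f) c,
      Finsupp.linearCombination ℝ (fun x => Kx x g) d⟫ =
    ⟪Finsupp.linearCombination ℝ φ c, Finsupp.linearCombination ℝ φ d⟫ * ⟪f, g⟫ := by
  classical
  simp only [Finsupp.linearCombination_apply, Finsupp.sum, sum_inner, inner_sum,
    real_inner_smul_left, real_inner_smul_right, hK, Finset.sum_mul, Finset.mul_sum]
  refine Finset.sum_congr rfl fun x _ => Finset.sum_congr rfl fun y _ => by ring

lemma cme_ker_le (hK : ∀ (x x' : E) (h h' : H), ⟪Kx x h, Kx x' h'⟫ = ⟪φ x, φ x'⟫ * ⟪h, h'⟫)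
    (f : H) :
    LinearMap.ker (Finsupp.linearCombination ℝ φ) ≤
      LinearMap.ker (Finsupp.linearCombination ℝ (fun x => Kx x f)) := by
  intro c hc
  simp only [LinearMap.mem_ker] at hc ⊢
  rw [← inner_self_eq_zero (𝕜 := ℝ), cme_inner_lc hK f f c c, hc, inner_zero_left, zero_mul]

/-- The map `φ x ↦ Kx x f` on the span of the features, as a linear map. -/
noncomputable def cmeV0
    (hK : ∀ (x x' : E) (h h' : H), ⟪Kx x h, Kx x' h'⟫ = ⟪φ x, φ x'⟫ * ⟪h, h'⟫)
    (f : H) : (Submodule.span ℝ (Set.range φ)) →ₗ[ℝ] G :=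
  (((LinearMap.ker (Finsupp.linearCombination ℝ φ)).liftQ
      (Finsupp.linearCombination ℝ (fun x => Kx x f)) (cme_ker_le hK f)).comp
    (LinearMap.quotKerEquivRange (Finsupp.linearCombination ℝ φ)).symm.toLinearMap).comp
    (LinearEquiv.ofEq _ _ (Finsupp.range_linearCombination ℝ (v := φ)).symm).toLinearMap

lemma cmeV0_apply
    (hK : ∀ (x x' : E) (h h' : H), ⟪Kx x h, Kx x' h'⟫ = ⟪φ x, φ x'⟫ * ⟪h, h'⟫)
    (f : H) (c : E →₀ ℝ)
    (hc : Finsupp.linearCombination ℝ φ c ∈ Submodule.span ℝ (Set.range φ)) :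
    cmeV0 hK f ⟨_, hc⟩ = Finsupp.linearCombination ℝ (fun x => Kx x f) c := by
  unfold cmeV0
  simp only [LinearMap.coe_comp, LinearEquiv.coe_coe, Function.comp_apply]
  have h1 : (LinearEquiv.ofEq _ _ (Finsupp.range_linearCombination ℝ (v := φ)).symm)
      (⟨_, hc⟩ : Submodule.span ℝ (Set.range φ)) =
      ⟨Finsupp.linearCombination ℝ φ c, LinearMap.mem_range_self _ c⟩ := by
    apply Subtype.ext; rfl
  rw [h1]
  rw [LinearMap.quotKerEquivRange_symm_apply_image]
  rfl

lemma cmeV0_norm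
    (hK : ∀ (x x' : E) (h h' : H), ⟪Kx x h, Kx x' h'⟫ = ⟪φ x, φ x'⟫ * ⟪h, h'⟫)
    (f : H) (s : Submodule.span ℝ (Set.range φ)) :
    ‖cmeV0 hK f s‖ ≤ ‖f‖ * ‖s‖ := by
  obtain ⟨c, hc⟩ : ∃ c, Finsupp.linearCombination ℝ φ c = (s : H) := by
    have hs : (s : H) ∈ LinearMap.range (Finsupp.linearCombination ℝ φ) := by
      rw [Finsupp.range_linearCombination]; exact s.2
    exact hs
  have hseq : s = ⟨Finsupp.linearCombination ℝ φ c, hc ▸ s.2⟩ := Subtype.ext hc.symm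
  rw [hseq, cmeV0_apply hK f c _]
  have key : ‖Finsupp.linearCombination ℝ (fun x => Kx x f) c‖ *
      ‖Finsupp.linearCombination ℝ (fun x => Kx x f) c‖ =
      (‖f‖ * ‖Finsupp.linearCombination ℝ φ c‖) * (‖f‖ * ‖Finsupp.linearCombination ℝ φ c‖) := by
    rw [← real_inner_self_eq_norm_mul_norm, cme_inner_lc hK f f c c,
      real_inner_self_eq_norm_mul_norm, real_inner_self_eq_norm_mul_norm]
    ring
  have := (mul_self_inj (norm_nonneg _) (by positivity)).mp key
  rw [this]
  have : ‖(⟨Finsupp.linearCombination ℝ φ c, hc ▸ s.2⟩ : Submodule.span ℝ (Set.range φ))‖ =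
      ‖Finsupp.linearCombination ℝ φ c‖ := rfl
  rw [this]

lemma cme_denseRange_subtypeL
    (hφdense : Dense (Submodule.span ℝ (Set.range φ) : Set H)) :
    DenseRange ((Submodule.span ℝ (Set.range φ)).subtypeL) :=
  hφdense.denseRange_val

/-- The extension of `φ x ↦ Kx x f` to a continuous linear map `H →L[ℝ] G`. -/
noncomputable def cmeV
    (hK : ∀ (x x' : E) (h h' : H), ⟪Kx x h, Kx x' h'⟫ = ⟪φ x, φ x'⟫ * ⟪h, h'⟫)
    (hφd : Dense (Submodule.span ℝ (Set.range φ) : Set H)) (f : H) : H →L[ℝ] G :=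
  ((cmeV0 hK f).mkContinuous ‖f‖ (cmeV0_norm hK f)).extend
    (Submodule.span ℝ (Set.range φ)).subtypeL

lemma cmeV_phi
    (hK : ∀ (x x' : E) (h h' : H), ⟪Kx x h, Kx x' h'⟫ = ⟪φ x, φ x'⟫ * ⟪h, h'⟫)
    (hφd : Dense (Submodule.span ℝ (Set.range φ) : Set H)) (f : H) (x : E) :
    cmeV hK hφd f (φ x) = Kx x f := by
  have hmem : φ x ∈ Submodule.span ℝ (Set.range φ) :=
    Submodule.subset_span ⟨x, rfl⟩
  have hx : φ x = (Submodule.span ℝ (Set.range φ)).subtypeL ⟨φ x, hmem⟩ := rfl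
  rw [hx]
  unfold cmeV
  rw [ContinuousLinearMap.extend_eq (h_dense := cme_denseRange_subtypeL hφd)
    (h_e := isUniformEmbedding_subtype_val.isUniformInducing)]
  have h1 : (⟨φ x, hmem⟩ : Submodule.span ℝ (Set.range φ)) =
      ⟨Finsupp.linearCombination ℝ φ (Finsupp.single x 1), by
        rw [Finsupp.linearCombination_single, one_smul]; exact hmem⟩ := by
    apply Subtype.ext; simp [Finsupp.linearCombination_single]
  rw [LinearMap.mkContinuous_apply, h1, cmeV0_apply hK f (Finsupp.single x 1)]
  simp [Finsupp.linearCombination_single]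

lemma cmeV_opNorm
    (hK : ∀ (x x' : E) (h h' : H), ⟪Kx x h, Kx x' h'⟫ = ⟪φ x, φ x'⟫ * ⟪h, h'⟫)
    (hφd : Dense (Submodule.span ℝ (Set.range φ) : Set H)) (f : H) :
    ‖cmeV hK hφd f‖ ≤ ‖f‖ := by
  have h_e : ∀ s : Submodule.span ℝ (Set.range φ),
      ‖s‖ ≤ (1 : ℝ≥0) * ‖(Submodule.span ℝ (Set.range φ)).subtypeL s‖ := by
    intro s; simp
  have h := ContinuousLinearMap.opNorm_extend_le
    ((cmeV0 hK f).mkContinuous ‖f‖ (cmeV0_norm hK f))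
    (e := (Submodule.span ℝ (Set.range φ)).subtypeL)
    (cme_denseRange_subtypeL hφd) h_e
  calc ‖cmeV hK hφd f‖ ≤ (1 : ℝ≥0) * ‖(cmeV0 hK f).mkContinuous ‖f‖ (cmeV0_norm hK f)‖ := h
    _ ≤ ‖f‖ := by simpa using LinearMap.mkContinuous_norm_le _ (norm_nonneg f) _

lemma cme_inner_K_V
    (hK : ∀ (x x' : E) (h h' : H), ⟪Kx x h, Kx x' h'⟫ = ⟪φ x, φ x'⟫ * ⟪h, h'⟫)
    (hφd : Dense (Submodule.span ℝ (Set.range φ) : Set H)) (x : E) (h f u : H) :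
    ⟪Kx x h, cmeV hK hφd f u⟫ = ⟪φ x, u⟫ * ⟪h, f⟫ := by
  have key : (innerSL ℝ (Kx x h)).comp (cmeV hK hφd f) = ⟪h, f⟫ • innerSL ℝ (φ x) := by
    apply ContinuousLinearMap.ext_on hφd
    rintro _ ⟨x', rfl⟩
    simp only [ContinuousLinearMap.coe_comp', Function.comp_apply, innerSL_apply_apply,
      ContinuousLinearMap.coe_smul', Pi.smul_apply, smul_eq_mul, cmeV_phi, hK]
    ring
  have := ContinuousLinearMap.ext_iff.mp key u
  simpa [mul_comm] using this

lemma cme_inner_V_V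
    (hK : ∀ (x x' : E) (h h' : H), ⟪Kx x h, Kx x' h'⟫ = ⟪φ x, φ x'⟫ * ⟪h, h'⟫)
    (hφd : Dense (Submodule.span ℝ (Set.range φ) : Set H)) (f u g v : H) :
    ⟪cmeV hK hφd f u, cmeV hK hφd g v⟫ = ⟪u, v⟫ * ⟪f, g⟫ := by
  have key : (innerSL ℝ (cmeV hK hφd f u)).comp (cmeV hK hφd g) =
      ⟪f, g⟫ • innerSL ℝ u := by
    apply ContinuousLinearMap.ext_on hφd
    rintro _ ⟨x, rfl⟩
    simp only [ContinuousLinearMap.coe_comp', Function.comp_apply, innerSL_apply_apply,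
      ContinuousLinearMap.coe_smul', Pi.smul_apply, smul_eq_mul, cmeV_phi]
    rw [real_inner_comm, cme_inner_K_V hK hφd x g f u, real_inner_comm u (φ x),
      real_inner_comm f g]
    ring
  have := ContinuousLinearMap.ext_iff.mp key v
  simpa [mul_comm] using this

lemma cmeV_addf
    (hK : ∀ (x x' : E) (h h' : H), ⟪Kx x h, Kx x' h'⟫ = ⟪φ x, φ x'⟫ * ⟪h, h'⟫)
    (hφd : Dense (Submodule.span ℝ (Set.range φ) : Set H)) (f f' : H) :
    cmeV hK hφd (f + f') = cmeV hK hφd f + cmeV hK hφd f' := by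
  apply ContinuousLinearMap.ext_on hφd
  rintro _ ⟨x, rfl⟩
  simp [cmeV_phi]

lemma cmeV_smulf
    (hK : ∀ (x x' : E) (h h' : H), ⟪Kx x h, Kx x' h'⟫ = ⟪φ x, φ x'⟫ * ⟪h, h'⟫)
    (hφd : Dense (Submodule.span ℝ (Set.range φ) : Set H)) (r : ℝ) (f : H) :
    cmeV hK hφd (r • f) = r • cmeV hK hφd f := by
  apply ContinuousLinearMap.ext_on hφd
  rintro _ ⟨x, rfl⟩
  simp [cmeV_phi]

end CMEAux


/-- Well-specified case equivalence.  The following are equivalent: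
(i) the conditional mean embedding `F*(·) = E[φ(Y)|X = ·] = ∫ φ(y) p(·,dy)` is an
element of the vector-valued RKHS `G` (i.e. some `F ∈ G` evaluates to it everywhere);
(ii) there is a Hilbert–Schmidt operator `A` on `H` with
`⟨f, A*φ(x)⟩ = E[f(Y)|X = x]` for all `x ∈ E`, `f ∈ H`.
Moreover, either implies (iii): there is a Hilbert–Schmidt operator `A` on `H` with
`‖A − P‖_{H→L²(μ)} = 0`, i.e. `(Af)(·) = E[f(Y)|X = ·]` μ-a.e. for every `f ∈ H`. -/
theorem well_specified_case
    {E H G ι : Type*} [MeasurableSpace E]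
    [NormedAddCommGroup H] [InnerProductSpace ℝ H] [CompleteSpace H]
    [NormedAddCommGroup G] [InnerProductSpace ℝ G] [CompleteSpace G]
    (μ ν : Measure E) [IsProbabilityMeasure μ] [IsProbabilityMeasure ν]
    (p : Kernel E E) [IsMarkovKernel p]
    (hmarg : μ.bind (fun x => p x) = ν)
    (φ : E → H) (hφmeas : StronglyMeasurable φ)
    (hφμ : MemLp φ 2 μ) (hφν : MemLp φ 2 ν)
    (hφint : ∀ x, Integrable φ (p x))
    (hφdense : Dense (Submodule.span ℝ (Set.range φ) : Set H))
    (b : HilbertBasis ι ℝ H)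
    (Kx : E → H →L[ℝ] G)
    (hK : ∀ (x x' : E) (h h' : H),
      ⟪Kx x h, Kx x' h'⟫ = ⟪φ x, φ x'⟫ * ⟪h, h'⟫)
    (hGdense : Dense (Submodule.span ℝ {g : G | ∃ x h, g = Kx x h} : Set G)) :
    ((∃ F : G, ∀ x : E,
        ContinuousLinearMap.adjoint (Kx x) F = ∫ y, φ y ∂(p x)) ↔
      (∃ A : H →L[ℝ] H, (Summable fun i => ‖A (b i)‖ ^ 2) ∧
        ∀ (x : E) (f : H),
          ⟪f, ContinuousLinearMap.adjoint A (φ x)⟫ = ∫ y, ⟪f, φ y⟫ ∂(p x))) ∧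
    ((∃ F : G, ∀ x : E,
        ContinuousLinearMap.adjoint (Kx x) F = ∫ y, φ y ∂(p x)) →
      ∃ A : H →L[ℝ] H, (Summable fun i => ‖A (b i)‖ ^ 2) ∧
        ∀ f : H, (fun x => ⟪A f, φ x⟫) =ᵐ[μ] fun x => ∫ y, ⟪f, φ y⟫ ∂(p x)) := by
  classical
  -- The orthonormal family `W (i,j) = b i ⊗ b j` of `G`
  set W : ι × ι → G := fun q => cmeV hK hφdense (b q.1) (b q.2) with hWdef
  have hb := b.orthonormal
  rw [orthonormal_iff_ite] at hb
  have hWon : Orthonormal ℝ W := by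
    rw [orthonormal_iff_ite]
    intro q r
    show ⟪cmeV hK hφdense (b q.1) (b q.2), cmeV hK hφdense (b r.1) (b r.2)⟫ = _
    rw [cme_inner_V_V hK hφdense, hb, hb]
    by_cases h1 : q.1 = r.1 <;> by_cases h2 : q.2 = r.2 <;>
      simp [h1, h2, Prod.ext_iff]
  have hKW : ∀ (x : E) (f : H) (q : ι × ι),
      ⟪Kx x f, W q⟫ = ⟪f, b q.1⟫ * ⟪φ x, b q.2⟫ := by
    intro x f q
    have hKx : Kx x f = cmeV hK hφdense f (φ x) := (cmeV_phi hK hφdense f x).symm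
    rw [hWdef, hKx, cme_inner_V_V hK hφdense]
    ring
  have hPar : ∀ v : H, HasSum (fun j => ⟪v, b j⟫ * ⟪b j, v⟫) (‖v‖ ^ 2) := fun v => by
    simpa [real_inner_self_eq_norm_sq] using b.hasSum_inner_mul_inner v v
  have hsq : ∀ r : ℝ, ‖r‖ ^ 2 = r * r := fun r => by
    rw [Real.norm_eq_abs, sq_abs, sq]
  -- (i) → (ii)
  have fwd : (∃ F : G, ∀ x : E,
        ContinuousLinearMap.adjoint (Kx x) F = ∫ y, φ y ∂(p x)) →
      (∃ A : H →L[ℝ] H, (Summable fun i => ‖A (b i)‖ ^ 2) ∧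
        ∀ (x : E) (f : H),
          ⟪f, ContinuousLinearMap.adjoint A (φ x)⟫ = ∫ y, ⟪f, φ y⟫ ∂(p x)) := by
    rintro ⟨F, hF⟩
    have hbound : ∀ f : H,
        ‖ContinuousLinearMap.adjoint (cmeV hK hφdense f) F‖ ≤ ‖F‖ * ‖f‖ := by
      intro f
      calc ‖ContinuousLinearMap.adjoint (cmeV hK hφdense f) F‖
          ≤ ‖ContinuousLinearMap.adjoint (cmeV hK hφdense f)‖ * ‖F‖ :=
            ContinuousLinearMap.le_opNorm _ _
        _ = ‖cmeV hK hφdense f‖ * ‖F‖ := by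
            rw [ContinuousLinearMap.adjoint.norm_map]
        _ ≤ ‖f‖ * ‖F‖ := by
            have := cmeV_opNorm hK hφdense f
            gcongr
        _ = ‖F‖ * ‖f‖ := mul_comm _ _
    set Alin : H →ₗ[ℝ] H :=
      { toFun := fun f => ContinuousLinearMap.adjoint (cmeV hK hφdense f) F
        map_add' := fun f g => by
          show ContinuousLinearMap.adjoint (cmeV hK hφdense (f + g)) F = _
          rw [cmeV_addf hK hφdense, map_add, ContinuousLinearMap.add_apply]
        map_smul' := fun r f => by
          show ContinuousLinearMap.adjoint (cmeV hK hφdense (r • f)) F = _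
          rw [cmeV_smulf hK hφdense, _root_.map_smul]
          simp } with hAlin
    set A : H →L[ℝ] H := Alin.mkContinuous ‖F‖ hbound with hAdef
    have hA : ∀ f u : H, ⟪A f, u⟫ = ⟪F, cmeV hK hφdense f u⟫ := fun f u =>
      ContinuousLinearMap.adjoint_inner_left (cmeV hK hφdense f) u F
    have hcoef : ∀ q : ι × ι, ⟪A (b q.1), b q.2⟫ = ⟪W q, F⟫ := fun q => by
      rw [hA, real_inner_comm]
    have hBessel : Summable (fun q : ι × ι => ‖⟪W q, F⟫‖ ^ 2) :=
      hWon.inner_products_summable (x := F)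
    have hsul : Summable fun i => ∑' j, ‖⟪W (i, j), F⟫‖ ^ 2 :=
      ((summable_prod_of_nonneg (fun q => by positivity)).mp hBessel).2
    have hAb : Summable fun i => ‖A (b i)‖ ^ 2 := by
      refine hsul.congr fun i => ?_
      rw [← (hPar (A (b i))).tsum_eq]
      refine tsum_congr fun j => ?_
      rw [← hcoef (i, j), hsq (⟪A (b i), b j⟫), real_inner_comm (A (b i)) (b j)]
    refine ⟨A, hAb, fun x f => ?_⟩
    rw [ContinuousLinearMap.adjoint_inner_right, hA f (φ x), cmeV_phi hK hφdense,
      real_inner_comm, ← ContinuousLinearMap.adjoint_inner_right, hF x]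
    exact (integral_inner (hφint x) f).symm
  -- (ii) → (i)
  have bwd : (∃ A : H →L[ℝ] H, (Summable fun i => ‖A (b i)‖ ^ 2) ∧
        ∀ (x : E) (f : H),
          ⟪f, ContinuousLinearMap.adjoint A (φ x)⟫ = ∫ y, ⟪f, φ y⟫ ∂(p x)) →
      (∃ F : G, ∀ x : E,
        ContinuousLinearMap.adjoint (Kx x) F = ∫ y, φ y ∂(p x)) := by
    rintro ⟨A, hAsum, hAx⟩
    -- the span of `W` is dense in `G`
    have hWdense : ⊤ ≤ (Submodule.span ℝ (Set.range W)).topologicalClosure := by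
      set M := (Submodule.span ℝ (Set.range W)).topologicalClosure with hM
      have hMclosed : IsClosed (M : Set G) :=
        Submodule.isClosed_topologicalClosure _
      have h1 : ∀ (i : ι) (x : E), Kx x (b i) ∈ M := by
        intro i x
        have hrepr := (b.hasSum_repr (φ x)).mapL (cmeV hK hφdense (b i))
        rw [cmeV_phi hK hφdense] at hrepr
        refine hMclosed.mem_of_tendsto hrepr (Filter.Eventually.of_forall fun s => ?_)
        refine Submodule.sum_mem _ fun j _ => ?_
        rw [_root_.map_smul]
        refine Submodule.smul_mem _ _ ?_
        exact Submodule.le_topologicalClosure _ (Submodule.subset_span ⟨(i, j), rfl⟩)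
      have h2 : ∀ (x : E) (h : H), Kx x h ∈ M := by
        intro x h
        have hrepr := (b.hasSum_repr h).mapL (Kx x)
        refine hMclosed.mem_of_tendsto hrepr (Filter.Eventually.of_forall fun s => ?_)
        refine Submodule.sum_mem _ fun i _ => ?_
        rw [_root_.map_smul]
        exact Submodule.smul_mem _ _ (h1 i x)
      intro g _
      have hle : Submodule.span ℝ {g : G | ∃ x h, g = Kx x h} ≤ M :=
        Submodule.span_le.mpr (by rintro _ ⟨x, h, rfl⟩; exact h2 x h)
      have hg : g ∈ closure (Submodule.span ℝ {g : G | ∃ x h, g = Kx x h} : Set G) :=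
        hGdense g
      have hsub : closure (Submodule.span ℝ {g : G | ∃ x h, g = Kx x h} : Set G) ⊆
          (M : Set G) := by
        rw [← hMclosed.closure_eq]
        exact closure_mono hle
      exact hsub hg
    set B' : HilbertBasis (ι × ι) ℝ G := HilbertBasis.mk hWon hWdense with hB'def
    have hB' : ∀ q, B' q = W q := fun q => by
      rw [hB'def]
      exact congrFun (HilbertBasis.coe_mk hWon hWdense) q
    set c : ι × ι → ℝ := fun q => ⟪A (b q.1), b q.2⟫ with hcdef
    have hc2 : Summable fun q : ι × ι => ‖c q‖ ^ 2 := by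
      have hterm : ∀ i j, ⟪A (b i), b j⟫ * ⟪b j, A (b i)⟫ = ‖c (i, j)‖ ^ 2 := by
        intro i j
        rw [hcdef, hsq, real_inner_comm (A (b i)) (b j)]
      refine (summable_prod_of_nonneg (fun q => by positivity)).mpr ⟨fun i => ?_, ?_⟩
      · exact (hPar (A (b i))).summable.congr (hterm i)
      · refine hAsum.congr fun i => ?_
        rw [← (hPar (A (b i))).tsum_eq]
        exact tsum_congr (hterm i)
    have hmem : Memℓp c 2 := by
      apply memℓp_gen
      have h2 : (2 : ENNReal).toReal = (2 : ℝ) := by norm_num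
      rw [h2]
      refine hc2.congr fun q => ?_
      rw [← Real.rpow_natCast ‖c q‖ 2]
      norm_num
    set F : G := B'.repr.symm ⟨c, hmem⟩ with hFdef
    have hFW : ∀ q, ⟪W q, F⟫ = c q := by
      intro q
      rw [← hB' q, ← HilbertBasis.repr_apply_apply, hFdef,
        LinearIsometryEquiv.apply_symm_apply]
    refine ⟨F, fun x => ?_⟩
    refine ext_inner_left ℝ fun f => ?_
    rw [ContinuousLinearMap.adjoint_inner_right, ← integral_inner (hφint x) f,
      ← hAx x f, ContinuousLinearMap.adjoint_inner_right]
    -- now : ⟪Kx x f, F⟫ = ⟪A f, φ x⟫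
    set g : ι × ι → ℝ := fun q => ⟪f, b q.1⟫ * ⟪φ x, b q.2⟫ * c q with hgdef
    have hsum1 : Summable fun q : ι × ι => (⟪f, b q.1⟫ * ⟪φ x, b q.2⟫) ^ 2 := by
      have hf2 : Summable fun i => ⟪f, b i⟫ ^ 2 :=
        (hPar f).summable.congr fun i => by
          rw [real_inner_comm (b i) f, sq]
      have hφ2 : Summable fun j => ⟪φ x, b j⟫ ^ 2 :=
        (hPar (φ x)).summable.congr fun j => by
          rw [real_inner_comm (b j) (φ x), sq]
      refine (hf2.mul_of_nonneg hφ2 (fun i => sq_nonneg _) fun j => sq_nonneg _).congr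
        fun q => ?_
      rw [mul_pow]
    have hc2' : Summable fun q : ι × ι => c q ^ 2 :=
      hc2.congr fun q => by rw [hsq, sq]
    have hsumg : Summable g := by
      refine Summable.of_norm ?_
      refine Summable.of_nonneg_of_le (fun q => norm_nonneg _) (fun q => ?_)
        (((hsum1.add hc2').div_const 2))
      rw [hgdef]
      simp only [Real.norm_eq_abs, Pi.add_apply]
      rw [abs_mul]
      nlinarith [sq_nonneg (|⟪f, b q.1⟫ * ⟪φ x, b q.2⟫| - |c q|),
        sq_abs (⟪f, b q.1⟫ * ⟪φ x, b q.2⟫), sq_abs (c q), abs_nonneg (c q),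
        abs_nonneg (⟪f, b q.1⟫ * ⟪φ x, b q.2⟫)]
    have hAfb : ∀ j, ⟪A f, b j⟫ = ∑' i, ⟪f, b i⟫ * c (i, j) := by
      intro j
      rw [← ContinuousLinearMap.adjoint_inner_right A f (b j),
        ← b.tsum_inner_mul_inner f (ContinuousLinearMap.adjoint A (b j))]
      exact tsum_congr fun i => by
        rw [ContinuousLinearMap.adjoint_inner_right]
    calc ⟪Kx x f, F⟫
        = ∑' q : ι × ι, ⟪Kx x f, B' q⟫ * ⟪B' q, F⟫ :=
          (B'.tsum_inner_mul_inner _ _).symm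
      _ = ∑' q : ι × ι, g q := by
          refine tsum_congr fun q => ?_
          rw [hB' q, hKW x f q, hFW q]
      _ = ∑' i, ∑' j, g (i, j) := Summable.tsum_prod hsumg
      _ = ∑' j, ∑' i, g (i, j) := by
          have h' : Summable (Function.uncurry fun i j => g (i, j)) := hsumg
          exact (Summable.tsum_comm h').symm
      _ = ∑' j, (∑' i, ⟪f, b i⟫ * c (i, j)) * ⟪φ x, b j⟫ := by
          refine tsum_congr fun j => ?_
          rw [← tsum_mul_right]
          exact tsum_congr fun i => by rw [hgdef]; ring
      _ = ∑' j, ⟪A f, b j⟫ * ⟪b j, φ x⟫ := by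
          refine tsum_congr fun j => ?_
          rw [← hAfb j, real_inner_comm (φ x) (b j)]
      _ = ⟪A f, φ x⟫ := b.tsum_inner_mul_inner _ _
  refine ⟨⟨fwd, bwd⟩, fun hF => ?_⟩
  obtain ⟨A, hAsum, hApt⟩ := fwd hF
  refine ⟨A, hAsum, fun f => Filter.Eventually.of_forall fun x => ?_⟩
  show ⟪A f, φ x⟫ = ∫ y, ⟪f, φ y⟫ ∂(p x)
  rw [← hApt x f, ContinuousLinearMap.adjoint_inner_right]
end

section
/- (Noncompactness of the generalized covariance operator) Let k be a measurable kernel with k(x,y) > 0 for all x,y and k(x,x) = 1, inducing an infinite-dimensional separable RKHS H, and let T : G → G, TF = ∫_E K_x K_x* F dμ(x), be the generalized covariance operator on the H-valued RKHS G induced by K = k·Id_H. Then T is not compact: for any fixed x' ∈ E and orthonormal system (e_i) of H, the functions F_i = K_{x'} e_i form an orthonormal system in G and ‖T F_i − T F_j‖²_G = 2M for all i ≠ j, where M = ∬ k(x',x)k(x',y)k(x,y) dμ(x)dμ(y) > 0. -/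
open MeasureTheory
open scoped RealInnerProductSpace

/-- Noncompactness of the generalized covariance operator.  Let `k(x,y) = ⟪φ x, φ y⟫`
be a measurable kernel with `k(x,y) > 0` and `k(x,x) = 1`, and let
`T : G → G`, `TF = ∫ K_x K_x* F dμ(x)`, be the generalized covariance operator on the
`H`-valued RKHS `G` induced by `K = k·Id_H`.  Then, for any fixed `x' ∈ E` and
orthonormal system `(e_i)_{i∈ℕ}` of `H`, the functions `F_i = K_{x'} e_i` form an
orthonormal system in `G` and `‖T F_i − T F_j‖² = 2M` for `i ≠ j`, where
`M = ∬ k(x',x) k(x',y) k(x,y) dμ(x) dμ(y) > 0`; in particular `T` is not compact. -/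
theorem generalized_covariance_operator_not_compact
    {E H G : Type*} [MeasurableSpace E]
    [NormedAddCommGroup H] [InnerProductSpace ℝ H] [CompleteSpace H]
    [NormedAddCommGroup G] [InnerProductSpace ℝ G] [CompleteSpace G]
    (μ : Measure E) [IsProbabilityMeasure μ]
    (φ : E → H) (hφmeas : StronglyMeasurable φ)
    (hkpos : ∀ x y : E, 0 < ⟪φ x, φ y⟫)
    (hknorm : ∀ x : E, ⟪φ x, φ x⟫ = 1)
    (Kx : E → H →L[ℝ] G)
    (hK : ∀ (x x' : E) (h h' : H),
      ⟪Kx x h, Kx x' h'⟫ = ⟪φ x, φ x'⟫ * ⟪h, h'⟫)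
    (hGdense : Dense (Submodule.span ℝ {g : G | ∃ x h, g = Kx x h} : Set G))
    (T : G →L[ℝ] G)
    (hTint : ∀ F : G,
      Integrable (fun x => Kx x (ContinuousLinearMap.adjoint (Kx x) F)) μ)
    (hT : ∀ F : G,
      T F = ∫ x, Kx x (ContinuousLinearMap.adjoint (Kx x) F) ∂μ)
    (x' : E) (e : ℕ → H) (he : Orthonormal ℝ e)
    (M : ℝ)
    (hM : M = ∫ x, ∫ y, ⟪φ x', φ x⟫ * ⟪φ x', φ y⟫ * ⟪φ x, φ y⟫ ∂μ ∂μ) :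
    Orthonormal ℝ (fun i => Kx x' (e i)) ∧
    (∀ i j : ℕ, i ≠ j →
      ‖T (Kx x' (e i)) - T (Kx x' (e j))‖ ^ 2 = 2 * M) ∧
    0 < M ∧
    ¬ IsCompactOperator (T : G → G) := by
  -- the adjoint formula
  have hadj : ∀ (x y : E) (h : H),
      (ContinuousLinearMap.adjoint (Kx x)) (Kx y h) = ⟪φ y, φ x⟫ • h := by
    intro x y h
    apply ext_inner_right ℝ
    intro v
    rw [ContinuousLinearMap.adjoint_inner_left, hK, real_inner_smul_left]
  -- rewrite the integrand of T applied to Kx x' h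
  have hfun : ∀ h : H,
      (fun x => Kx x (ContinuousLinearMap.adjoint (Kx x) (Kx x' h)))
        = fun x => ⟪φ x', φ x⟫ • Kx x h := by
    intro h
    funext x
    rw [hadj, (Kx x).map_smul]
  have hint : ∀ h : H, Integrable (fun x => ⟪φ x', φ x⟫ • Kx x h) μ := by
    intro h
    have := hTint (Kx x' h)
    rwa [hfun h] at this
  have hTF : ∀ h : H, T (Kx x' h) = ∫ x, ⟪φ x', φ x⟫ • Kx x h ∂μ := by
    intro h
    rw [hT, hfun h]
  -- inner products with T F
  have hTF_inner : ∀ (h : H) (g : G),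
      ⟪T (Kx x' h), g⟫ = ∫ x, ⟪φ x', φ x⟫ * ⟪Kx x h, g⟫ ∂μ := by
    intro h g
    rw [real_inner_comm g (T ((Kx x') h)), hTF, ← integral_inner (hint h) g]
    congr 1
    funext x
    rw [real_inner_smul_right, real_inner_comm _ g]
  -- inner product of two T F's
  have hTT : ∀ a b : H,
      ⟪T (Kx x' a), T (Kx x' b)⟫
        = ∫ x, ⟪φ x', φ x⟫ * ∫ y, ⟪φ x', φ y⟫ * (⟪φ x, φ y⟫ * ⟪a, b⟫) ∂μ ∂μ := by
    intro a b
    rw [hTF_inner]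
    congr 1
    funext x
    congr 1
    rw [real_inner_comm, hTF_inner]
    congr 1
    funext y
    rw [hK, real_inner_comm (φ x) (φ y), real_inner_comm a b]
  -- orthonormality of the e's as numbers
  have he' : ∀ i j : ℕ, ⟪e i, e j⟫ = if i = j then 1 else 0 :=
    fun i j => by rw [orthonormal_iff_ite] at he; exact he i j
  -- first part: orthonormal system in G
  have hON : Orthonormal ℝ (fun i => Kx x' (e i)) := by
    rw [orthonormal_iff_ite]
    intro i j
    rw [hK, hknorm, he', one_mul]
  -- ‖T F_i‖² = M
  have hnormTF : ∀ i : ℕ, ⟪T (Kx x' (e i)), T (Kx x' (e i))⟫ = M := by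
    intro i
    rw [hTT, hM]
    congr 1
    funext x
    rw [← integral_const_mul]
    congr 1
    funext y
    rw [he', if_pos rfl]
    ring
  -- ⟪T F_i, T F_j⟫ = 0 for i ≠ j
  have hTTzero : ∀ i j : ℕ, i ≠ j → ⟪T (Kx x' (e i)), T (Kx x' (e j))⟫ = 0 := by
    intro i j hij
    rw [hTT]
    have : ∀ x : E, (∫ y, ⟪φ x', φ y⟫ * (⟪φ x, φ y⟫ * ⟪e i, e j⟫) ∂μ) = 0 := by
      intro x
      rw [he', if_neg hij]
      simp
    simp only [this, mul_zero, integral_zero]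
  -- the distance formula
  have hdist : ∀ i j : ℕ, i ≠ j →
      ‖T (Kx x' (e i)) - T (Kx x' (e j))‖ ^ 2 = 2 * M := by
    intro i j hij
    rw [norm_sub_sq_real, ← real_inner_self_eq_norm_sq, ← real_inner_self_eq_norm_sq,
      hnormTF, hnormTF, hTTzero i j hij]
    ring
  -- positivity of M
  have hMpos : 0 < M := by
    -- M = ‖T F_0‖² ≥ 0, and ⟪T F_0, F_0⟫ > 0 so T F_0 ≠ 0
    have hnorm1 : ∀ x : E, ‖φ x‖ = 1 := by
      intro x
      have h1 := hknorm x
      rw [real_inner_self_eq_norm_sq] at h1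
      nlinarith [norm_nonneg (φ x)]
    have hmeas : StronglyMeasurable fun x => ⟪φ x', φ x⟫ * ⟪φ x', φ x⟫ :=
      ((stronglyMeasurable_const.inner hφmeas).mul
        (stronglyMeasurable_const.inner hφmeas))
    have hintk : Integrable (fun x => ⟪φ x', φ x⟫ * ⟪φ x', φ x⟫) μ := by
      refine ⟨hmeas.aestronglyMeasurable, ?_⟩
      apply MeasureTheory.HasFiniteIntegral.of_bounded (C := 1)
      filter_upwards with x
      have h1 : |⟪φ x', φ x⟫| ≤ 1 := by
        have := abs_real_inner_le_norm (φ x') (φ x)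
        rwa [hnorm1, hnorm1, one_mul] at this
      have := abs_mul ⟪φ x', φ x⟫ ⟪φ x', φ x⟫
      rw [Real.norm_eq_abs, this]
      nlinarith [abs_nonneg ⟪φ x', φ x⟫]
    have hpos : 0 < ∫ x, ⟪φ x', φ x⟫ * ⟪φ x', φ x⟫ ∂μ := by
      rw [integral_pos_iff_support_of_nonneg
        (fun x => le_of_lt (mul_pos (hkpos x' x) (hkpos x' x))) hintk]
      have : Function.support (fun x => ⟪φ x', φ x⟫ * ⟪φ x', φ x⟫) = Set.univ := by
        ext x
        simp only [Function.mem_support, Set.mem_univ, iff_true]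
        exact (mul_pos (hkpos x' x) (hkpos x' x)).ne'
      rw [this]
      simp
    have hinner0 : ⟪T (Kx x' (e 0)), Kx x' (e 0)⟫
        = ∫ x, ⟪φ x', φ x⟫ * ⟪φ x', φ x⟫ ∂μ := by
      rw [hTF_inner]
      congr 1
      funext x
      rw [hK, he', if_pos rfl, mul_one, real_inner_comm (φ x') (φ x)]
    have hTF0ne : T (Kx x' (e 0)) ≠ 0 := by
      intro h0
      rw [h0, inner_zero_left] at hinner0
      exact absurd hinner0.symm (ne_of_gt hpos)
    have := hnormTF 0
    rw [real_inner_self_eq_norm_sq] at this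
    have h2 : 0 < ‖T (Kx x' (e 0))‖ := norm_pos_iff.mpr hTF0ne
    nlinarith
  refine ⟨hON, hdist, hMpos, ?_⟩
  -- noncompactness
  intro hc
  have hKcpt : IsCompact (closure ((T : G → G) '' Metric.closedBall 0 1)) := by
    have := hc.isCompact_closure_image_closedBall (𝕜₁ := ℝ)
      (f := (T : G →ₗ[ℝ] G)) 1
    exact this
  set u : ℕ → G := fun i => T (Kx x' (e i)) with hu
  have hmem : ∀ i, u i ∈ closure ((T : G → G) '' Metric.closedBall 0 1) := by
    intro i
    apply subset_closure
    refine ⟨Kx x' (e i), ?_, rfl⟩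
    rw [Metric.mem_closedBall, dist_zero_right]
    exact le_of_eq (hON.1 i)
  obtain ⟨x₀, -, ψ, hψmono, hψtend⟩ := hKcpt.tendsto_subseq hmem
  have hdist' : ∀ i j : ℕ, i ≠ j → dist (u i) (u j) = Real.sqrt (2 * M) := by
    intro i j hij
    rw [dist_eq_norm, ← Real.sqrt_sq (norm_nonneg (u i - u j))]
    congr 1
    exact hdist i j hij
  have hsq : 0 < Real.sqrt (2 * M) := Real.sqrt_pos.mpr (by linarith)
  rw [Metric.tendsto_atTop] at hψtend
  obtain ⟨N, hN⟩ := hψtend (Real.sqrt (2 * M) / 2) (by linarith)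
  have h1 := hN N le_rfl
  have h2 := hN (N + 1) (Nat.le_succ N)
  simp only [Function.comp_apply] at h1 h2
  have hne : ψ N ≠ ψ (N + 1) := fun h => by
    exact absurd (hψmono.injective h) (Nat.succ_ne_self N).symm
  have := hdist' (ψ N) (ψ (N + 1)) hne
  have htri := dist_triangle (u (ψ N)) x₀ (u (ψ (N + 1)))
  rw [this] at htri
  rw [dist_comm] at h2
  linarith
end

section
/- (Duality of T and Ξ_{C_XX}) Let F ∈ G and A = Θ⁻¹(F) ∈ HS(H) its operator representation, so F = Aφ(·). Then Θ⁻¹(TF) = A·C_XX and Θ⁻¹((T + λ Id_G)F) = A·(C_XX + λ Id_H) for all λ > 0, where C_XX = ∫_E φ(x) ⊗ φ(x) dμ(x) is the kernel covariance operator. -/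
open MeasureTheory
open scoped RealInnerProductSpace

/-- Duality of the generalized covariance operator `T` on `G` and the
right-composition operator `Ξ_{C_XX}` on `HS(H)`.  If `F ∈ G` corresponds under `Θ` to
the Hilbert–Schmidt operator `A`, i.e. `F(x) = Kₓ* F = A φ(x)` for all `x`, then
`Θ⁻¹(TF) = A ∘ C_XX` and `Θ⁻¹((T + λ Id_G)F) = A ∘ (C_XX + λ Id_H)`, expressed here
through evaluations. -/
theorem duality_T_composition
    {E H G : Type*} [MeasurableSpace E]
    [NormedAddCommGroup H] [InnerProductSpace ℝ H] [CompleteSpace H]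
    [NormedAddCommGroup G] [InnerProductSpace ℝ G] [CompleteSpace G]
    (μ : Measure E) [IsProbabilityMeasure μ]
    (φ : E → H) (hφmeas : StronglyMeasurable φ) (hφμ : MemLp φ 2 μ)
    (Kx : E → H →L[ℝ] G)
    (hK : ∀ (x x' : E) (h h' : H),
      ⟪Kx x h, Kx x' h'⟫ = ⟪φ x, φ x'⟫ * ⟪h, h'⟫)
    (hGdense : Dense (Submodule.span ℝ {g : G | ∃ x h, g = Kx x h} : Set G))
    (T : G →L[ℝ] G)
    (hTint : ∀ F : G,
      Integrable (fun x => Kx x (ContinuousLinearMap.adjoint (Kx x) F)) μ)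
    (hT : ∀ F : G,
      T F = ∫ x, Kx x (ContinuousLinearMap.adjoint (Kx x) F) ∂μ)
    (C : H →L[ℝ] H)
    (hC : ∀ f h : H, ⟪h, C f⟫ = ∫ x, ⟪f, φ x⟫ * ⟪h, φ x⟫ ∂μ)
    (F : G) (A : H →L[ℝ] H)
    (hFA : ∀ x : E, ContinuousLinearMap.adjoint (Kx x) F = A (φ x))
    (lam : ℝ) (hlam : 0 < lam) :
    (∀ x : E,
      ContinuousLinearMap.adjoint (Kx x) (T F) = (A.comp C) (φ x)) ∧
    (∀ x : E,
      ContinuousLinearMap.adjoint (Kx x) (T F + lam • F)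
        = (A.comp (C + lam • ContinuousLinearMap.id ℝ H)) (φ x)) := by
  have hInt : Integrable (fun x => Kx x (A (φ x))) μ := by
    have := hTint F
    simpa only [hFA] using this
  have key : ∀ x₀ : E,
      ContinuousLinearMap.adjoint (Kx x₀) (T F) = A (C (φ x₀)) := by
    intro x₀
    apply ext_inner_left ℝ
    intro h
    rw [ContinuousLinearMap.adjoint_inner_right, hT F]
    simp_rw [hFA]
    rw [← integral_inner (𝕜 := ℝ) hInt]
    simp_rw [hK]
    have hrhs : ⟪h, A (C (φ x₀))⟫ = ⟪ContinuousLinearMap.adjoint A h, C (φ x₀)⟫ := by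
      rw [ContinuousLinearMap.adjoint_inner_left]
    rw [hrhs, hC]
    refine integral_congr_ae (Filter.Eventually.of_forall fun x => ?_)
    simp only [ContinuousLinearMap.adjoint_inner_left]
  refine ⟨fun x => by rw [key x]; rfl, fun x => ?_⟩
  rw [map_add, (ContinuousLinearMap.adjoint (Kx x)).map_smul, key x, hFA x]
  simp only [ContinuousLinearMap.comp_apply, ContinuousLinearMap.add_apply,
    ContinuousLinearMap.smul_apply, ContinuousLinearMap.id_apply, A.map_add, A.map_smul]
end

section
/- (Closed form Tikhonov solution) The Tikhonov–Phillips regularized solution F_λ = (T + λ Id_G)⁻¹ I_μ* F* ∈ G corresponds under the isomorphism Θ to the operator C_YX (C_XX + λ Id_H)⁻¹; equivalently, the regularized operator solution is A_λ = (C_XX + λ Id_H)⁻¹ C_XY. -/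
open MeasureTheory ProbabilityTheory
open scoped RealInnerProductSpace
open scoped ENNReal NNReal

set_option maxHeartbeats 4000000 in
/-- Closed form of the Tikhonov–Phillips regularized solution.  Let `F_λ ∈ G` solve
`(T + λ Id_G) F_λ = I_μ* F*`, where `I_μ* F*` is the element `Gstar ∈ G` with
evaluations `(I_μ* F*)(x) = ∫ k(x,x') F*(x') dμ(x')`, `F*(x') = ∫ φ(y) p(x',dy)` being
the conditional mean embedding.  Then under the isomorphism `Θ`, `F_λ` corresponds to
the operator `C_YX ∘ (C_XX + λ Id_H)⁻¹`; i.e. `F_λ(x) = C_YX ((C_XX + λ)⁻¹ φ(x))`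
for all `x` (equivalently, the regularized operator solution is
`A_λ = (C_XX + λ Id_H)⁻¹ C_XY`). -/
theorem closed_form_tikhonov_solution
    {E H G : Type*} [MeasurableSpace E]
    [NormedAddCommGroup H] [InnerProductSpace ℝ H] [CompleteSpace H]
    [NormedAddCommGroup G] [InnerProductSpace ℝ G] [CompleteSpace G]
    (μ ν : Measure E) [IsProbabilityMeasure μ] [IsProbabilityMeasure ν]
    (p : Kernel E E) [IsMarkovKernel p]
    (hmarg : μ.bind (fun x => p x) = ν)
    (φ : E → H) (hφmeas : StronglyMeasurable φ)
    (hφμ : MemLp φ 2 μ) (hφν : MemLp φ 2 ν)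
    (hφint : ∀ x, Integrable φ (p x))
    (Kx : E → H →L[ℝ] G)
    (hK : ∀ (x x' : E) (h h' : H),
      ⟪Kx x h, Kx x' h'⟫ = ⟪φ x, φ x'⟫ * ⟪h, h'⟫)
    (hGdense : Dense (Submodule.span ℝ {g : G | ∃ x h, g = Kx x h} : Set G))
    (T : G →L[ℝ] G)
    (hTint : ∀ F : G,
      Integrable (fun x => Kx x (ContinuousLinearMap.adjoint (Kx x) F)) μ)
    (hT : ∀ F : G,
      T F = ∫ x, Kx x (ContinuousLinearMap.adjoint (Kx x) F) ∂μ)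
    (C : H →L[ℝ] H)
    (hC : ∀ f h : H, ⟪h, C f⟫ = ∫ x, ⟪f, φ x⟫ * ⟪h, φ x⟫ ∂μ)
    (Cyx : H →L[ℝ] H)
    (hCyx : ∀ f h : H,
      ⟪h, Cyx f⟫ = ∫ x, ∫ y, ⟪f, φ x⟫ * ⟪h, φ y⟫ ∂(p x) ∂μ)
    (lam : ℝ) (hlam : 0 < lam)
    (Binv : H →L[ℝ] H)
    (hBinv1 : (C + lam • ContinuousLinearMap.id ℝ H).comp Binv
      = ContinuousLinearMap.id ℝ H)
    (hBinv2 : Binv.comp (C + lam • ContinuousLinearMap.id ℝ H)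
      = ContinuousLinearMap.id ℝ H)
    (Gstar : G)
    (hGstar : ∀ x : E, ContinuousLinearMap.adjoint (Kx x) Gstar
      = ∫ x', ⟪φ x, φ x'⟫ • (∫ y, φ y ∂(p x')) ∂μ)
    (Flam : G)
    (hFlam : T Flam + lam • Flam = Gstar) :
    ∀ x : E, ContinuousLinearMap.adjoint (Kx x) Flam = (Cyx.comp Binv) (φ x) := by
  classical
  -- Step 1: action of the adjoint on the generators.
  have hKadj : ∀ (x x' : E) (h : H),
      ContinuousLinearMap.adjoint (Kx x) (Kx x' h) = (⟪φ x, φ x'⟫ : ℝ) • h := by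
    intro x x' h
    apply ext_inner_right ℝ
    intro v
    rw [ContinuousLinearMap.adjoint_inner_left, hK, real_inner_smul_left,
      real_inner_comm (φ x') (φ x)]
  -- Step 2: norms.
  have hKnorm : ∀ (x : E) (v : H), ‖Kx x v‖ = ‖φ x‖ * ‖v‖ := by
    intro x v
    have h1 : ‖Kx x v‖ ^ 2 = (‖φ x‖ * ‖v‖) ^ 2 := by
      rw [← real_inner_self_eq_norm_sq, hK, real_inner_self_eq_norm_sq,
        real_inner_self_eq_norm_sq]
      ring
    calc ‖Kx x v‖ = Real.sqrt (‖Kx x v‖ ^ 2) := (Real.sqrt_sq (norm_nonneg _)).symm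
      _ = Real.sqrt ((‖φ x‖ * ‖v‖) ^ 2) := by rw [h1]
      _ = ‖φ x‖ * ‖v‖ := Real.sqrt_sq (by positivity)
  have hadj_le : ∀ (x : E) (F : G),
      ‖ContinuousLinearMap.adjoint (Kx x) F‖ ≤ ‖φ x‖ * ‖F‖ := by
    intro x F
    have h1 : ‖ContinuousLinearMap.adjoint (Kx x)‖ = ‖Kx x‖ :=
      ContinuousLinearMap.adjoint.norm_map (Kx x)
    have h2 : ‖Kx x‖ ≤ ‖φ x‖ :=
      ContinuousLinearMap.opNorm_le_bound _ (norm_nonneg _) fun v => (hKnorm x v).le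
    calc ‖ContinuousLinearMap.adjoint (Kx x) F‖
        ≤ ‖ContinuousLinearMap.adjoint (Kx x)‖ * ‖F‖ := ContinuousLinearMap.le_opNorm _ _
      _ ≤ ‖φ x‖ * ‖F‖ := by
          rw [h1]; exact mul_le_mul_of_nonneg_right h2 (norm_nonneg _)
  -- basic measurability facts
  have hsm_inner : ∀ w : H, StronglyMeasurable (fun x => (⟪w, φ x⟫ : ℝ)) := fun w =>
    stronglyMeasurable_const.inner hφmeas
  have hsm_inner' : ∀ w : H, StronglyMeasurable (fun x => (⟪φ x, w⟫ : ℝ)) := fun w =>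
    hφmeas.inner stronglyMeasurable_const
  have hsm_joint : StronglyMeasurable (fun q : E × E => (⟪φ q.1, φ q.2⟫ : ℝ)) :=
    (hφmeas.comp_measurable measurable_fst).inner (hφmeas.comp_measurable measurable_snd)
  -- measurability of inner products against `Kx · h`
  have hGsm : ∀ (h : H) (F : G), StronglyMeasurable (fun x => (⟪Kx x h, F⟫ : ℝ)) := by
    intro h F
    have hspan : ∀ F' ∈ Submodule.span ℝ {g : G | ∃ x h, g = Kx x h},
        StronglyMeasurable (fun x => (⟪Kx x h, F'⟫ : ℝ)) := by
      intro F' hF'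
      induction hF' using Submodule.span_induction with
      | mem g hg =>
        obtain ⟨z, h', rfl⟩ := hg
        have he : (fun x => (⟪Kx x h, Kx z h'⟫ : ℝ))
            = fun x => (⟪φ x, φ z⟫ : ℝ) * ⟪h, h'⟫ := by
          funext x; exact hK x z h h'
        rw [he]
        exact (hsm_inner' (φ z)).mul_const _
      | zero => simpa using stronglyMeasurable_const
      | add a b ha hb iha ihb => simp only [inner_add_right]; exact iha.add ihb
      | smul c a ha iha => simpa [real_inner_smul_right] using iha.const_mul c
    obtain ⟨seq, hmem, hlim⟩ := mem_closure_iff_seq_limit.1 (hGdense F)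
    refine stronglyMeasurable_of_tendsto (f := fun n x => (⟪Kx x h, seq n⟫ : ℝ))
      Filter.atTop (fun n => hspan _ (hmem n)) ?_
    rw [tendsto_pi_nhds]
    intro x
    exact Filter.Tendsto.inner tendsto_const_nhds hlim
  have hsm_u : ∀ h : H,
      StronglyMeasurable (fun x => (⟪h, ContinuousLinearMap.adjoint (Kx x) Flam⟫ : ℝ)) := by
    intro h
    have he : (fun x => (⟪h, ContinuousLinearMap.adjoint (Kx x) Flam⟫ : ℝ))
        = fun x => (⟪Kx x h, Flam⟫ : ℝ) := by
      funext x; rw [ContinuousLinearMap.adjoint_inner_right]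
    rw [he]; exact hGsm h Flam
  -- measurability of the conditional mean embedding
  have hsm_m : StronglyMeasurable (fun x' => ∫ y, φ y ∂(p x')) := by
    have h0 : StronglyMeasurable (Function.uncurry fun (_ : E) (y : E) => φ y) :=
      hφmeas.comp_measurable measurable_snd
    exact h0.integral_kernel_prod_right (κ := p)
  have h_inner_m : ∀ (h : H) (x' : E),
      (⟪h, ∫ y, φ y ∂(p x')⟫ : ℝ) = ∫ y, (⟪h, φ y⟫ : ℝ) ∂(p x') := fun h x' =>
    (integral_inner (hφint x') h).symm
  -- square integrability of ‖φ‖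
  have hrpow2 : ∀ a : ℝ, a ^ ((2 : ℝ≥0∞).toReal) = a ^ (2 : ℕ) := by
    intro a
    norm_num
  have hφ2μ : Integrable (fun x => ‖φ x‖ ^ 2) μ := by
    have h0 := hφμ.integrable_norm_rpow (by norm_num) (by norm_num)
    simpa [hrpow2] using h0
  have hφ2ν : Integrable (fun x => ‖φ x‖ ^ 2) ν := by
    have h0 := hφν.integrable_norm_rpow (by norm_num) (by norm_num)
    simpa [hrpow2] using h0
  have hlint2 : ∀ κμ : Measure E, Integrable (fun x => ‖φ x‖ ^ 2) κμ →
      ∫⁻ x, (‖φ x‖₊ : ℝ≥0∞) ^ 2 ∂κμ < ⊤ := by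
    intro κμ hint
    have h1 := hint.hasFiniteIntegral
    rw [hasFiniteIntegral_def] at h1
    simp [nnnorm_pow, nnnorm_norm, ENNReal.coe_pow] at h1; exact h1
  -- lintegral over the bind
  have hbind : ∫⁻ x', (∫⁻ y, (‖φ y‖₊ : ℝ≥0∞) ^ 2 ∂(p x')) ∂μ
      = ∫⁻ y, (‖φ y‖₊ : ℝ≥0∞) ^ 2 ∂ν := by
    rw [← hmarg, Measure.lintegral_bind (f := fun y => (‖φ y‖₊ : ℝ≥0∞) ^ 2) p.measurable.aemeasurable ((hφmeas.enorm : Measurable fun y => (‖φ y‖₊ : ℝ≥0∞)).pow_const 2).aemeasurable]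
  have hq_meas : Measurable fun x' => ∫⁻ y, (‖φ y‖₊ : ℝ≥0∞) ^ 2 ∂(p x') := by
    have h0 : Measurable (Function.uncurry fun (_ : E) (y : E) => (‖φ y‖₊ : ℝ≥0∞) ^ 2) :=
      ((hφmeas.enorm : Measurable fun y => (‖φ y‖₊ : ℝ≥0∞)).comp measurable_snd).pow_const 2
    exact h0.lintegral_kernel_prod_right
  -- elementary ENNReal inequality
  have emul_le : ∀ a b : ℝ≥0∞, a * b ≤ a ^ 2 + b ^ 2 := by
    intro a b
    rcases le_total a b with hab | hab
    · calc a * b ≤ b * b := mul_le_mul_left hab b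
        _ = b ^ 2 := (sq b).symm
        _ ≤ a ^ 2 + b ^ 2 := le_add_self
    · calc a * b ≤ a * a := mul_le_mul_right hab a
        _ = a ^ 2 := (sq a).symm
        _ ≤ a ^ 2 + b ^ 2 := le_self_add
  have hrpow_sq : ∀ a : ℝ≥0∞, (a ^ (1/2 : ℝ)) ^ (2 : ℕ) = a := by
    intro a
    rw [← ENNReal.rpow_natCast (a ^ (1/2 : ℝ)) 2, ← ENNReal.rpow_mul]
    norm_num
  have hepow : ∀ a : ℝ≥0∞, a ^ (2 : ℝ) = a ^ (2 : ℕ) := by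
    intro a
    rw [← ENNReal.rpow_natCast a 2]
    norm_num
  -- Hölder bound on the mean embedding
  have hm_enorm : ∀ x' : E, (‖∫ y, φ y ∂(p x')‖₊ : ℝ≥0∞)
      ≤ (∫⁻ y, (‖φ y‖₊ : ℝ≥0∞) ^ 2 ∂(p x')) ^ (1/2 : ℝ) := by
    intro x'
    have hHolder := ENNReal.lintegral_mul_le_Lp_mul_Lq (p x')
      (p := (2:ℝ)) (q := (2:ℝ)) (Real.holderConjugate_iff.mpr ⟨one_lt_two, by norm_num⟩)
      (f := fun y => (‖φ y‖₊ : ℝ≥0∞)) (g := fun _ => 1)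
      (hφmeas.enorm : Measurable fun y => (‖φ y‖₊ : ℝ≥0∞)).aemeasurable aemeasurable_const
    simp only [ENNReal.one_rpow, lintegral_one, measure_univ, mul_one, one_mul,
      ENNReal.one_rpow, Pi.mul_apply] at hHolder
    calc (‖∫ y, φ y ∂(p x')‖₊ : ℝ≥0∞) ≤ ∫⁻ y, (‖φ y‖₊ : ℝ≥0∞) ∂(p x') :=
          enorm_integral_le_lintegral_enorm _
      _ ≤ (∫⁻ y, (‖φ y‖₊ : ℝ≥0∞) ^ (2:ℝ) ∂(p x')) ^ (1/2 : ℝ) := by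
          simpa using hHolder
      _ = (∫⁻ y, (‖φ y‖₊ : ℝ≥0∞) ^ 2 ∂(p x')) ^ (1/2 : ℝ) := by
          simp_rw [hepow]
  -- key integrability of the integrand appearing in `Gstar`
  have hGint : ∀ x : E,
      Integrable (fun x' => (⟪φ x, φ x'⟫ : ℝ) • (∫ y, φ y ∂(p x'))) μ := by
    intro x
    refine ⟨(((hsm_inner (φ x))).smul hsm_m).aestronglyMeasurable, ?_⟩
    rw [hasFiniteIntegral_def]
    have hbound : ∀ x' : E, (‖(⟪φ x, φ x'⟫ : ℝ) • (∫ y, φ y ∂(p x'))‖₊ : ℝ≥0∞)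
        ≤ (‖φ x‖₊ : ℝ≥0∞) *
          ((‖φ x'‖₊ : ℝ≥0∞) ^ 2 + ∫⁻ y, (‖φ y‖₊ : ℝ≥0∞) ^ 2 ∂(p x')) := by
      intro x'
      have h1 : (‖(⟪φ x, φ x'⟫ : ℝ)‖₊ : ℝ≥0∞) ≤ (‖φ x‖₊ : ℝ≥0∞) * (‖φ x'‖₊ : ℝ≥0∞) := by
        have := norm_inner_le_norm (𝕜 := ℝ) (φ x) (φ x')
        exact_mod_cast this
      calc (‖(⟪φ x, φ x'⟫ : ℝ) • (∫ y, φ y ∂(p x'))‖₊ : ℝ≥0∞)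
          = (‖(⟪φ x, φ x'⟫ : ℝ)‖₊ : ℝ≥0∞) * (‖∫ y, φ y ∂(p x')‖₊ : ℝ≥0∞) := by
            rw [nnnorm_smul]; push_cast; ring
        _ ≤ ((‖φ x‖₊ : ℝ≥0∞) * (‖φ x'‖₊ : ℝ≥0∞)) *
              ((∫⁻ y, (‖φ y‖₊ : ℝ≥0∞) ^ 2 ∂(p x')) ^ (1/2 : ℝ)) :=
            mul_le_mul' h1 (hm_enorm x')
        _ = (‖φ x‖₊ : ℝ≥0∞) * ((‖φ x'‖₊ : ℝ≥0∞) *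
              (∫⁻ y, (‖φ y‖₊ : ℝ≥0∞) ^ 2 ∂(p x')) ^ (1/2 : ℝ)) := by ring
        _ ≤ (‖φ x‖₊ : ℝ≥0∞) * ((‖φ x'‖₊ : ℝ≥0∞) ^ 2 +
              ((∫⁻ y, (‖φ y‖₊ : ℝ≥0∞) ^ 2 ∂(p x')) ^ (1/2 : ℝ)) ^ (2:ℕ)) :=
            mul_le_mul_right (emul_le _ _) _
        _ = (‖φ x‖₊ : ℝ≥0∞) * ((‖φ x'‖₊ : ℝ≥0∞) ^ 2 +
              ∫⁻ y, (‖φ y‖₊ : ℝ≥0∞) ^ 2 ∂(p x')) := by rw [hrpow_sq]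
    calc ∫⁻ x', (‖(⟪φ x, φ x'⟫ : ℝ) • (∫ y, φ y ∂(p x'))‖₊ : ℝ≥0∞) ∂μ
        ≤ ∫⁻ x', (‖φ x‖₊ : ℝ≥0∞) *
            ((‖φ x'‖₊ : ℝ≥0∞) ^ 2 + ∫⁻ y, (‖φ y‖₊ : ℝ≥0∞) ^ 2 ∂(p x')) ∂μ :=
          lintegral_mono hbound
      _ = (‖φ x‖₊ : ℝ≥0∞) * ((∫⁻ x', (‖φ x'‖₊ : ℝ≥0∞) ^ 2 ∂μ) +
            ∫⁻ x', (∫⁻ y, (‖φ y‖₊ : ℝ≥0∞) ^ 2 ∂(p x')) ∂μ) := by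
          rw [lintegral_const_mul _ (f := fun x' => (‖φ x'‖₊ : ℝ≥0∞) ^ 2 + ∫⁻ y, (‖φ y‖₊ : ℝ≥0∞) ^ 2 ∂(p x')) (((hφmeas.enorm : Measurable fun y => (‖φ y‖₊ : ℝ≥0∞)).pow_const 2).add hq_meas),
            lintegral_add_left (f := fun x' => (‖φ x'‖₊ : ℝ≥0∞) ^ 2) ((hφmeas.enorm : Measurable fun y => (‖φ y‖₊ : ℝ≥0∞)).pow_const 2)]
      _ < ⊤ := by
          rw [hbind]
          exact ENNReal.mul_lt_top ENNReal.coe_lt_top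
            (ENNReal.add_lt_top.2 ⟨hlint2 μ hφ2μ, hlint2 ν hφ2ν⟩)
  -- integrability of the integrand defining `T`
  have hu_int : ∀ x : E,
      Integrable (fun x' => (⟪φ x, φ x'⟫ : ℝ) •
        (ContinuousLinearMap.adjoint (Kx x') Flam)) μ := by
    intro x
    have h0 := (ContinuousLinearMap.adjoint (Kx x)).integrable_comp (hTint Flam)
    refine h0.congr ?_
    filter_upwards with x'
    exact hKadj x x' _
  -- the adjoint applied to `T Flam`
  have hTadj : ∀ x : E, ContinuousLinearMap.adjoint (Kx x) (T Flam)
      = ∫ x', (⟪φ x, φ x'⟫ : ℝ) • (ContinuousLinearMap.adjoint (Kx x') Flam) ∂μ := by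
    intro x
    rw [hT Flam, ← ContinuousLinearMap.integral_comp_comm _ (hTint Flam)]
    exact integral_congr_ae (Filter.Eventually.of_forall fun x' => hKadj x x' _)
  -- `Cyx` applied to `φ x`
  have hCyx_phi : ∀ x : E, Cyx (φ x)
      = ∫ x', (⟪φ x, φ x'⟫ : ℝ) • (∫ y, φ y ∂(p x')) ∂μ := by
    intro x
    apply ext_inner_left ℝ
    intro h
    rw [hCyx (φ x) h, ← integral_inner (hGint x) h]
    refine integral_congr_ae (Filter.Eventually.of_forall fun x' => ?_)
    dsimp only
    rw [real_inner_smul_right, h_inner_m h x', integral_const_mul]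
  -- integrability for `C φ x`
  have hφ2int : ∀ x : E, Integrable (fun x' => (⟪φ x, φ x'⟫ : ℝ) • φ x') μ := by
    intro x
    refine Integrable.mono' (hφ2μ.const_mul ‖φ x‖)
      (((hsm_inner (φ x))).smul hφmeas).aestronglyMeasurable ?_
    filter_upwards with x'
    rw [norm_smul]
    calc ‖(⟪φ x, φ x'⟫ : ℝ)‖ * ‖φ x'‖ ≤ (‖φ x‖ * ‖φ x'‖) * ‖φ x'‖ :=
          mul_le_mul_of_nonneg_right (norm_inner_le_norm _ _) (norm_nonneg _)
      _ = ‖φ x‖ * ‖φ x'‖ ^ 2 := by ring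
  have hCphi : ∀ x : E, C (φ x) = ∫ x', (⟪φ x, φ x'⟫ : ℝ) • φ x' ∂μ := by
    intro x
    apply ext_inner_left ℝ
    intro h
    rw [hC (φ x) h, ← integral_inner (hφ2int x) h]
    refine integral_congr_ae (Filter.Eventually.of_forall fun x' => ?_)
    dsimp only
    rw [real_inner_smul_right]
  -- integrability for the candidate solution
  have hg_int : ∀ x : E,
      Integrable (fun x' => (⟪φ x, φ x'⟫ : ℝ) • ((Cyx.comp Binv) (φ x'))) μ := by
    intro x
    have h0 := (Cyx.comp Binv).integrable_comp (hφ2int x)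
    refine h0.congr ?_
    filter_upwards with x'
    rw [_root_.map_smul]
  -- the candidate solution satisfies the same equation
  have hg_eq : ∀ x : E, lam • ((Cyx.comp Binv) (φ x))
      + ∫ x', (⟪φ x, φ x'⟫ : ℝ) • ((Cyx.comp Binv) (φ x')) ∂μ = Cyx (φ x) := by
    intro x
    have h1 : (fun x' => (⟪φ x, φ x'⟫ : ℝ) • ((Cyx.comp Binv) (φ x')))
        = fun x' => (Cyx.comp Binv) ((⟪φ x, φ x'⟫ : ℝ) • φ x') := by
      funext x'; rw [_root_.map_smul]
    rw [h1, ContinuousLinearMap.integral_comp_comm _ (hφ2int x), ← hCphi x]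
    have h2 : Binv (C (φ x) + lam • φ x) = φ x := by
      have h3 := congrArg (fun M : H →L[ℝ] H => M (φ x)) hBinv2
      simpa using h3
    calc lam • ((Cyx.comp Binv) (φ x)) + (Cyx.comp Binv) (C (φ x))
        = (Cyx.comp Binv) (C (φ x) + lam • φ x) := by
          rw [map_add, _root_.map_smul]; abel
      _ = Cyx (Binv (C (φ x) + lam • φ x)) := rfl
      _ = Cyx (φ x) := by rw [h2]
  -- the actual solution satisfies the same equation
  have hu_eq : ∀ x : E, lam • (ContinuousLinearMap.adjoint (Kx x) Flam)
      + ∫ x', (⟪φ x, φ x'⟫ : ℝ) • (ContinuousLinearMap.adjoint (Kx x') Flam) ∂μ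
      = Cyx (φ x) := by
    intro x
    have h1 := congrArg (ContinuousLinearMap.adjoint (Kx x)) hFlam
    rw [map_add, _root_.map_smul, hTadj x, hGstar x, ← hCyx_phi x] at h1
    rw [add_comm] at h1
    exact h1
  -- now the scalar uniqueness argument
  intro x₀
  apply ext_inner_left ℝ
  intro h
  set A : H →L[ℝ] H := Cyx.comp Binv with hA_def
  set w : E → ℝ := fun x =>
    (⟪h, ContinuousLinearMap.adjoint (Kx x) Flam⟫ : ℝ) - ⟪h, A (φ x)⟫ with hw_def
  have hw_sm : StronglyMeasurable w :=
    (hsm_u h).sub ((stronglyMeasurable_const.inner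
      (A.continuous.comp_stronglyMeasurable hφmeas)))
  have hw_bd : ∀ x : E, |w x| ≤ (‖h‖ * (‖Flam‖ + ‖A‖)) * ‖φ x‖ := by
    intro x
    have h1 : |(⟪h, ContinuousLinearMap.adjoint (Kx x) Flam⟫ : ℝ)| ≤ ‖h‖ * (‖φ x‖ * ‖Flam‖) :=
      le_trans (abs_real_inner_le_norm _ _)
        (mul_le_mul_of_nonneg_left (hadj_le x Flam) (norm_nonneg _))
    have h2 : |(⟪h, A (φ x)⟫ : ℝ)| ≤ ‖h‖ * (‖A‖ * ‖φ x‖) :=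
      le_trans (abs_real_inner_le_norm _ _)
        (mul_le_mul_of_nonneg_left (A.le_opNorm _) (norm_nonneg _))
    calc |w x| ≤ |(⟪h, ContinuousLinearMap.adjoint (Kx x) Flam⟫ : ℝ)| + |(⟪h, A (φ x)⟫ : ℝ)| :=
          abs_sub _ _
      _ ≤ ‖h‖ * (‖φ x‖ * ‖Flam‖) + ‖h‖ * (‖A‖ * ‖φ x‖) := add_le_add h1 h2
      _ = (‖h‖ * (‖Flam‖ + ‖A‖)) * ‖φ x‖ := by ring
  -- integrability of all scalar integrands
  have hLint : ∀ f : H, Integrable (fun x' => (⟪f, φ x'⟫ : ℝ) * w x') μ := by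
    intro f
    refine Integrable.mono' ((hφ2μ.const_mul (‖f‖ * (‖h‖ * (‖Flam‖ + ‖A‖)))))
      ((hsm_inner f).mul hw_sm).aestronglyMeasurable ?_
    filter_upwards with x'
    rw [Real.norm_eq_abs, abs_mul]
    calc |(⟪f, φ x'⟫ : ℝ)| * |w x'|
        ≤ (‖f‖ * ‖φ x'‖) * ((‖h‖ * (‖Flam‖ + ‖A‖)) * ‖φ x'‖) := by
          refine mul_le_mul (abs_real_inner_le_norm _ _) (hw_bd x') (abs_nonneg _) ?_
          positivity
      _ = ‖f‖ * (‖h‖ * (‖Flam‖ + ‖A‖)) * ‖φ x'‖ ^ 2 := by ring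
  -- the pointwise relation (**)
  have hstar : ∀ x : E, lam * w x = - ∫ x', (⟪φ x, φ x'⟫ : ℝ) * w x' ∂μ := by
    intro x
    have int1 : Integrable (fun x' => (⟪φ x, φ x'⟫ : ℝ) *
        (⟪h, ContinuousLinearMap.adjoint (Kx x') Flam⟫ : ℝ)) μ := by
      refine ((hu_int x).const_inner h).congr ?_
      filter_upwards with x'
      rw [real_inner_smul_right]
    have int2 : Integrable (fun x' => (⟪φ x, φ x'⟫ : ℝ) * (⟪h, A (φ x')⟫ : ℝ)) μ := by
      refine ((hg_int x).const_inner h).congr ?_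
      filter_upwards with x'
      rw [real_inner_smul_right]
    have e1 := congrArg (fun v => (⟪h, v⟫ : ℝ)) (hu_eq x)
    have e2 := congrArg (fun v => (⟪h, v⟫ : ℝ)) (hg_eq x)
    simp only [inner_add_right, real_inner_smul_right] at e1 e2
    rw [← integral_inner (hu_int x) h] at e1
    rw [← integral_inner (hg_int x) h] at e2
    simp only [real_inner_smul_right] at e1 e2
    have hsub : ∫ x', (⟪φ x, φ x'⟫ : ℝ) * w x' ∂μ
        = (∫ x', (⟪φ x, φ x'⟫ : ℝ) *
              (⟪h, ContinuousLinearMap.adjoint (Kx x') Flam⟫ : ℝ) ∂μ)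
          - ∫ x', (⟪φ x, φ x'⟫ : ℝ) * (⟪h, A (φ x')⟫ : ℝ) ∂μ := by
      rw [← integral_sub int1 int2]
      refine integral_congr_ae (Filter.Eventually.of_forall fun x' => ?_)
      simp only [hw_def]
      ring
    rw [hsub]
    simp only [hw_def]
    linarith [e1, e2]
  -- Fubini argument
  have hfub : ∀ f : H, ∫ x', (⟪C f, φ x'⟫ : ℝ) * w x' ∂μ
      = -(lam * ∫ x', (⟪f, φ x'⟫ : ℝ) * w x' ∂μ) := by
    intro f
    have hCf : ∀ x' : E, (⟪C f, φ x'⟫ : ℝ) = ∫ z, (⟪f, φ z⟫ : ℝ) * ⟪φ x', φ z⟫ ∂μ := by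
      intro x'
      rw [real_inner_comm]
      exact hC f (φ x')
    have hprod : Integrable (Function.uncurry fun x' z =>
        ((⟪f, φ z⟫ : ℝ) * (⟪φ x', φ z⟫ : ℝ)) * w x') (μ.prod μ) := by
      have hbint : Integrable (fun q : E × E =>
          ((‖f‖ * (‖h‖ * (‖Flam‖ + ‖A‖))) * ‖φ q.1‖ ^ 2) * ‖φ q.2‖ ^ 2) (μ.prod μ) :=
        (hφ2μ.const_mul _).mul_prod hφ2μ
      have hjsm : StronglyMeasurable (Function.uncurry fun x' z =>
          ((⟪f, φ z⟫ : ℝ) * (⟪φ x', φ z⟫ : ℝ)) * w x') := by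
        have h1 : StronglyMeasurable (fun q : E × E => (⟪f, φ q.2⟫ : ℝ)) :=
          (hsm_inner f).comp_measurable measurable_snd
        have h3 : StronglyMeasurable (fun q : E × E => w q.1) :=
          hw_sm.comp_measurable measurable_fst
        exact (h1.mul hsm_joint).mul h3
      refine Integrable.mono' hbint hjsm.aestronglyMeasurable ?_
      filter_upwards with q
      obtain ⟨a, b⟩ := q
      dsimp only [Function.uncurry_apply_pair]
      rw [Real.norm_eq_abs, abs_mul, abs_mul]
      calc |(⟪f, φ b⟫ : ℝ)| * |(⟪φ a, φ b⟫ : ℝ)| * |w a|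
          ≤ (‖f‖ * ‖φ b‖) * ((‖φ a‖ * ‖φ b‖)) * ((‖h‖ * (‖Flam‖ + ‖A‖)) * ‖φ a‖) := by
            refine mul_le_mul ?_ (hw_bd a) (abs_nonneg _) (by positivity)
            refine mul_le_mul (abs_real_inner_le_norm _ _) (abs_real_inner_le_norm _ _)
              (abs_nonneg _) (by positivity)
        _ = ((‖f‖ * (‖h‖ * (‖Flam‖ + ‖A‖))) * ‖φ a‖ ^ 2) * ‖φ b‖ ^ 2 := by ring
    calc ∫ x', (⟪C f, φ x'⟫ : ℝ) * w x' ∂μ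
        = ∫ x', ∫ z, ((⟪f, φ z⟫ : ℝ) * (⟪φ x', φ z⟫ : ℝ)) * w x' ∂μ ∂μ := by
          refine integral_congr_ae (Filter.Eventually.of_forall fun x' => ?_)
          dsimp only
          rw [hCf x', ← integral_mul_const]
      _ = ∫ z, ∫ x', ((⟪f, φ z⟫ : ℝ) * (⟪φ x', φ z⟫ : ℝ)) * w x' ∂μ ∂μ :=
          integral_integral_swap hprod
      _ = ∫ z, (⟪f, φ z⟫ : ℝ) * ∫ x', (⟪φ z, φ x'⟫ : ℝ) * w x' ∂μ ∂μ := by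
          refine integral_congr_ae (Filter.Eventually.of_forall fun z => ?_)
          dsimp only
          rw [← integral_const_mul]
          refine integral_congr_ae (Filter.Eventually.of_forall fun x' => ?_)
          dsimp only
          rw [real_inner_comm (φ x') (φ z)]
          ring
      _ = ∫ z, (⟪f, φ z⟫ : ℝ) * -(lam * w z) ∂μ := by
          refine integral_congr_ae (Filter.Eventually.of_forall fun z => ?_)
          dsimp only
          have h4 : ∫ x', (⟪φ z, φ x'⟫ : ℝ) * w x' ∂μ = -(lam * w z) := by
            have h5 := hstar z
            linarith
          rw [h4]
      _ = -(lam * ∫ x', (⟪f, φ x'⟫ : ℝ) * w x' ∂μ) := by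
          rw [← integral_const_mul, ← integral_neg]
          refine integral_congr_ae (Filter.Eventually.of_forall fun z => ?_)
          dsimp only
          ring
  -- all scalar integrals vanish
  have hL0 : ∀ f : H, ∫ x', (⟪f, φ x'⟫ : ℝ) * w x' ∂μ = 0 := by
    intro f
    have h2 : C (Binv f) + lam • Binv f = f := by
      have h3 := congrArg (fun M : H →L[ℝ] H => M f) hBinv1
      simpa using h3
    have h3 : ∀ x' : E, (⟪f, φ x'⟫ : ℝ) * w x' =
        (⟪C (Binv f), φ x'⟫ : ℝ) * w x' + lam * ((⟪Binv f, φ x'⟫ : ℝ) * w x') := by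
      intro x'
      conv_lhs => rw [← h2]
      rw [inner_add_left, real_inner_smul_left]
      ring
    calc ∫ x', (⟪f, φ x'⟫ : ℝ) * w x' ∂μ
        = ∫ x', ((⟪C (Binv f), φ x'⟫ : ℝ) * w x'
            + lam * ((⟪Binv f, φ x'⟫ : ℝ) * w x')) ∂μ :=
          integral_congr_ae (Filter.Eventually.of_forall h3)
      _ = (∫ x', (⟪C (Binv f), φ x'⟫ : ℝ) * w x' ∂μ)
            + lam * ∫ x', (⟪Binv f, φ x'⟫ : ℝ) * w x' ∂μ := by
          rw [integral_add (hLint _) ((hLint _).const_mul lam), integral_const_mul]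
      _ = 0 := by rw [hfub (Binv f)]; ring
  -- conclude
  have hfin := hstar x₀
  rw [hL0 (φ x₀)] at hfin
  have hw0 : w x₀ = 0 := by
    have := hlam.ne'
    simpa [this] using hfin
  have hw0' : (⟪h, ContinuousLinearMap.adjoint (Kx x₀) Flam⟫ : ℝ) - ⟪h, A (φ x₀)⟫ = 0 := by
    simpa [hw_def] using hw0
  rw [hA_def] at hw0'
  linarith [hw0']
end
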